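/- arXiv:math/0606514 — 3 statements merged into one kernel-verified Lean document; each statement's English description precedes it below -/
import Mathlib

section
/- Let G = (V,E) be a finite simple graph on n vertices with adjacency matrix A and let λ₁ denote the largest eigenvalue of A. Let β ∈ [0,1] satisfy βλ₁ < 1, and let I ⊆ V be a nonempty set of initially infected vertices, |X(0)| = |I|. Then the expected total number of nodes ever infected (and removed) in the Reed-Frost epidemic satisfies E[|Y(∞)|] ≤ √(n·|X(0)|) / (1 − βλ₁). -/
open Finset

namespace VirusSpread

open Matrix

variable {V : Type*} [Fintype V] [DecidableEq V]

/-! ### Spectral auxiliary lemmas -/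

section Spectral
variable {M : Matrix V V ℝ} (hA : M.IsHermitian)

lemma aux_pow_mulVec_basis (k : ℕ) (j : V) :
    (M ^ k) *ᵥ ⇑(hA.eigenvectorBasis j) = (hA.eigenvalues j ^ k) • ⇑(hA.eigenvectorBasis j) := by
  induction k with
  | zero => simp
  | succ k ih =>
    rw [pow_succ', ← Matrix.mulVec_mulVec, ih, Matrix.mulVec_smul,
      hA.mulVec_eigenvectorBasis, smul_smul, pow_succ, mul_comm]

lemma aux_basis_expansion (x : V → ℝ) :
    ∑ j, (⇑(hA.eigenvectorBasis j) ⬝ᵥ x) • ⇑(hA.eigenvectorBasis j) = x := by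
  have h := hA.eigenvectorBasis.sum_repr ((WithLp.equiv 2 (V → ℝ)).symm x)
  have h2 : ∀ j, hA.eigenvectorBasis.repr ((WithLp.equiv 2 (V → ℝ)).symm x) j
      = ⇑(hA.eigenvectorBasis j) ⬝ᵥ x := by
    intro j
    rw [hA.eigenvectorBasis.repr_apply_apply]
    simp [PiLp.inner_apply, dotProduct, mul_comm]
  funext i
  have h3 := congrArg (fun z => z i) h
  simp only [h2] at h3
  simpa using h3

lemma aux_pow_mulVec_expand (k : ℕ) (y : V → ℝ) :
    (M ^ k) *ᵥ y = ∑ j, (hA.eigenvalues j ^ k * (⇑(hA.eigenvectorBasis j) ⬝ᵥ y))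
      • ⇑(hA.eigenvectorBasis j) := by
  conv_lhs => rw [← aux_basis_expansion hA y, ← Matrix.mulVecLin_apply, map_sum]
  refine Finset.sum_congr rfl fun j _ => ?_
  rw [_root_.map_smul, Matrix.mulVecLin_apply, aux_pow_mulVec_basis hA k, smul_smul, mul_comm]

lemma aux_dotProduct_pow_mulVec (k : ℕ) (x y : V → ℝ) :
    x ⬝ᵥ ((M ^ k) *ᵥ y)
      = ∑ j, hA.eigenvalues j ^ k * (⇑(hA.eigenvectorBasis j) ⬝ᵥ x)
          * (⇑(hA.eigenvectorBasis j) ⬝ᵥ y) := by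
  rw [aux_pow_mulVec_expand hA k y]
  simp only [dotProduct, Finset.sum_apply, Pi.smul_apply, smul_eq_mul, Finset.mul_sum]
  rw [Finset.sum_comm]
  refine Finset.sum_congr rfl fun j _ => ?_
  simp only [Finset.mul_sum, Finset.sum_mul]
  rw [Finset.sum_comm]
  exact Finset.sum_congr rfl fun a _ => Finset.sum_congr rfl fun b _ => by ring

lemma aux_parseval (x : V → ℝ) :
    ∑ j, (⇑(hA.eigenvectorBasis j) ⬝ᵥ x) ^ 2 = x ⬝ᵥ x := by
  have h := aux_dotProduct_pow_mulVec hA 0 x x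
  simp only [pow_zero, Matrix.one_mulVec, one_mul] at h
  rw [h]
  exact Finset.sum_congr rfl fun j _ => by ring

lemma aux_rayleigh {lam1 : ℝ} (hmax : ∀ v, hA.eigenvalues v ≤ lam1) (z : V → ℝ) :
    z ⬝ᵥ (M *ᵥ z) ≤ lam1 * (z ⬝ᵥ z) := by
  have h := aux_dotProduct_pow_mulVec hA 1 z z
  rw [pow_one] at h
  rw [h, ← aux_parseval hA z, Finset.mul_sum]
  refine Finset.sum_le_sum fun j _ => ?_
  have h1 := sq_nonneg (⇑(hA.eigenvectorBasis j) ⬝ᵥ z)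
  have h2 := hmax j
  nlinarith [h1, h2]

lemma aux_perron {lam1 : ℝ} (hnn : ∀ i j, 0 ≤ M i j)
    (hmax : ∀ v, hA.eigenvalues v ≤ lam1) (j : V) :
    |hA.eigenvalues j| ≤ lam1 := by
  set v : V → ℝ := ⇑(hA.eigenvectorBasis j) with hv
  have hvv : v ⬝ᵥ v = 1 := by
    have h := aux_parseval hA v
    rw [← h]
    have horth := hA.eigenvectorBasis.orthonormal
    have h2 : ∀ i, ⇑(hA.eigenvectorBasis i) ⬝ᵥ v = if i = j then 1 else 0 := by
      intro i
      have := orthonormal_iff_ite.mp horth i j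
      rw [PiLp.inner_apply] at this
      simp only [RCLike.inner_apply, starRingEnd_apply] at this
      simpa [dotProduct, hv, mul_comm] using this
    simp [h2]
  have hev : v ⬝ᵥ (M *ᵥ v) = hA.eigenvalues j := by
    have h := hA.mulVec_eigenvectorBasis j
    rw [show M *ᵥ v = hA.eigenvalues j • v from h, dotProduct_smul, smul_eq_mul,
      hvv, mul_one]
  have habsv : (fun i => |v i|) ⬝ᵥ (fun i => |v i|) = 1 := by
    rw [← hvv]; simp [dotProduct, abs_mul_abs_self]
  have habs : (fun i => |v i|) ⬝ᵥ (M *ᵥ (fun i => |v i|)) ≤ lam1 := by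
    have h := aux_rayleigh hA hmax (fun i => |v i|)
    rw [habsv, mul_one] at h
    exact h
  have key : |v ⬝ᵥ (M *ᵥ v)| ≤ (fun i => |v i|) ⬝ᵥ (M *ᵥ (fun i => |v i|)) := by
    simp only [dotProduct, Matrix.mulVec]
    calc |∑ i, v i * ∑ k, M i k * v k| ≤ ∑ i, |v i * ∑ k, M i k * v k| :=
          Finset.abs_sum_le_sum_abs _ _
      _ ≤ ∑ i, |v i| * ∑ k, M i k * |v k| := by
          refine Finset.sum_le_sum fun i _ => ?_
          rw [abs_mul]
          refine mul_le_mul_of_nonneg_left ?_ (abs_nonneg _)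
          calc |∑ k, M i k * v k| ≤ ∑ k, |M i k * v k| := Finset.abs_sum_le_sum_abs _ _
            _ = ∑ k, M i k * |v k| := Finset.sum_congr rfl fun k _ => by
                rw [abs_mul, abs_of_nonneg (hnn i k)]
  rw [← hev]
  exact le_trans key habs

lemma aux_spec_bound {c : ℝ} (hc : 0 ≤ c) (habs : ∀ j, |hA.eigenvalues j| ≤ c)
    (k : ℕ) (x y : V → ℝ) :
    x ⬝ᵥ ((M ^ k) *ᵥ y) ≤ c ^ k * (Real.sqrt (x ⬝ᵥ x) * Real.sqrt (y ⬝ᵥ y)) := by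
  rw [aux_dotProduct_pow_mulVec hA k x y]
  set a : V → ℝ := fun j => ⇑(hA.eigenvectorBasis j) ⬝ᵥ x
  set b : V → ℝ := fun j => ⇑(hA.eigenvectorBasis j) ⬝ᵥ y
  calc ∑ j, hA.eigenvalues j ^ k * a j * b j
      ≤ ∑ j, c ^ k * (|a j| * |b j|) := by
        refine Finset.sum_le_sum fun j _ => ?_
        calc hA.eigenvalues j ^ k * a j * b j ≤ |hA.eigenvalues j ^ k * a j * b j| :=
              le_abs_self _
          _ = |hA.eigenvalues j| ^ k * (|a j| * |b j|) := by
              rw [abs_mul, abs_mul, abs_pow, mul_assoc]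
          _ ≤ c ^ k * (|a j| * |b j|) := by
              exact mul_le_mul_of_nonneg_right (pow_le_pow_left₀ (abs_nonneg _) (habs j) k)
                (mul_nonneg (abs_nonneg _) (abs_nonneg _))
    _ = c ^ k * ∑ j, |a j| * |b j| := (Finset.mul_sum _ _ _).symm
    _ ≤ c ^ k * (Real.sqrt (x ⬝ᵥ x) * Real.sqrt (y ⬝ᵥ y)) := by
        refine mul_le_mul_of_nonneg_left ?_ (pow_nonneg hc k)
        have hcs := Finset.sum_mul_sq_le_sq_mul_sq Finset.univ (fun j => |a j|) (fun j => |b j|)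
        have h1 : ∑ j, |a j| ^ 2 = x ⬝ᵥ x := by
          rw [← aux_parseval hA x]; exact Finset.sum_congr rfl fun j _ => sq_abs _
        have h2 : ∑ j, |b j| ^ 2 = y ⬝ᵥ y := by
          rw [← aux_parseval hA y]; exact Finset.sum_congr rfl fun j _ => sq_abs _
        rw [h1, h2] at hcs
        have hnn : (0:ℝ) ≤ ∑ j, |a j| * |b j| :=
          Finset.sum_nonneg fun j _ => mul_nonneg (abs_nonneg _) (abs_nonneg _)
        have hx : (0:ℝ) ≤ x ⬝ᵥ x := Finset.sum_nonneg fun i _ => mul_self_nonneg _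
        rw [← Real.sqrt_mul hx]
        have h4 := Real.sqrt_le_sqrt hcs
        rwa [Real.sqrt_sq hnn] at h4

end Spectral

/-! ### Combinatorial auxiliary lemmas -/

lemma aux_sum_w {α : Type*} [DecidableEq α] (β : ℝ) (E : Finset α) :
    ∑ H ∈ E.powerset, β ^ H.card * (1 - β) ^ (E.card - H.card) = 1 := by
  have h := Finset.prod_add (fun _ : α => β) (fun _ : α => (1 - β)) E
  simp only [add_sub_cancel, Finset.prod_const, one_pow] at h
  rw [Finset.sum_congr rfl (fun H hH => ?_)] at h
  · exact h.symm
  · rw [Finset.card_sdiff_of_subset (Finset.mem_powerset.mp hH)]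

open scoped Classical in
lemma aux_sum_w_superset {α : Type*} [DecidableEq α] (β : ℝ) (E S : Finset α) (hSE : S ⊆ E) :
    ∑ H ∈ E.powerset, (β ^ H.card * (1 - β) ^ (E.card - H.card)) * (if S ⊆ H then 1 else 0)
      = β ^ S.card := by
  simp only [mul_ite, mul_one, mul_zero]
  rw [← Finset.sum_filter]
  have key : ∑ H ∈ E.powerset.filter (fun H => S ⊆ H),
      β ^ H.card * (1 - β) ^ (E.card - H.card)
      = ∑ T ∈ (E \ S).powerset, β ^ (T.card + S.card) * (1 - β) ^ ((E \ S).card - T.card) := by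
    refine Finset.sum_bij' (fun H _ => H \ S) (fun T _ => T ∪ S) ?_ ?_ ?_ ?_ ?_
    · intro H hH
      rw [Finset.mem_filter, Finset.mem_powerset] at hH
      exact Finset.mem_powerset.mpr (Finset.sdiff_subset_sdiff hH.1 le_rfl)
    · intro T hT
      rw [Finset.mem_powerset] at hT
      rw [Finset.mem_filter, Finset.mem_powerset]
      constructor
      · exact Finset.union_subset (hT.trans Finset.sdiff_subset) hSE
      · exact Finset.subset_union_right
    · intro H hH
      rw [Finset.mem_filter] at hH
      exact Finset.sdiff_union_of_subset hH.2
    · intro T hT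
      rw [Finset.mem_powerset] at hT
      exact Finset.union_sdiff_cancel_right
        (Finset.disjoint_of_subset_left hT Finset.sdiff_disjoint)
    · intro H hH
      rw [Finset.mem_filter, Finset.mem_powerset] at hH
      obtain ⟨hHE, hSH⟩ := hH
      have h1 : (H \ S).card + S.card = H.card := by
        rw [Finset.card_sdiff_of_subset hSH]
        exact Nat.sub_add_cancel (Finset.card_le_card hSH)
      have h2 : (E \ S).card - (H \ S).card = E.card - H.card := by
        have c1 := Finset.card_le_card hSH
        have c2 := Finset.card_le_card hHE
        rw [Finset.card_sdiff_of_subset hSE, Finset.card_sdiff_of_subset hSH]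
        omega
      rw [h1, h2]
  rw [key]
  have heach : ∀ T ∈ (E \ S).powerset,
      β ^ (T.card + S.card) * (1 - β) ^ ((E \ S).card - T.card)
      = β ^ S.card * (β ^ T.card * (1 - β) ^ ((E \ S).card - T.card)) := by
    intro T _; ring
  rw [Finset.sum_congr rfl heach, ← Finset.mul_sum, aux_sum_w β (E \ S), mul_one]

/-! ### Definitions (pinned) -/

/-- Bernoulli bond percolation on `G`: the subgraph of `G` consisting of the retained
edge set `H`. -/
def percSubgraph (G : SimpleGraph V) (H : Finset (Sym2 V)) : SimpleGraph V where
  Adj u v := G.Adj u v ∧ s(u, v) ∈ H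
  symm := ⟨fun u v h => ⟨h.1.symm, by rw [Sym2.eq_swap]; exact h.2⟩⟩
  loopless := ⟨fun u h => G.loopless.irrefl u h.1⟩

open scoped Classical in
/-- The set of vertices joined to the initial set `I` by a path of retained edges;
this is the final removed set `Y(∞)` of the Reed–Frost epidemic. -/
noncomputable def reachedSet (G : SimpleGraph V) (H : Finset (Sym2 V)) (I : Finset V) :
    Finset V :=
  Finset.univ.filter fun v => ∃ u ∈ I, (percSubgraph G H).Reachable u v

open scoped Classical in
/-- The probability of the percolation configuration with retained edge set `H`, when each
edge of `G` is retained independently with probability `β`. -/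
noncomputable def percWeight (G : SimpleGraph V) (β : ℝ) (H : Finset (Sym2 V)) : ℝ :=
  β ^ H.card * (1 - β) ^ (G.edgeFinset.card - H.card)

open scoped Classical in
/-- The expected final size `E[|Y(∞)|]` of the Reed–Frost epidemic on `G` with
per-contact infection probability `β`, started from the initial infected set `I`. -/
noncomputable def expectedFinalSize (G : SimpleGraph V) (β : ℝ) (I : Finset V) : ℝ :=
  ∑ H ∈ G.edgeFinset.powerset, percWeight G β H * ((reachedSet G H I).card : ℝ)

/-! ### Bridging lemmas -/

lemma percWeight_eq (G : SimpleGraph V) [DecidableRel G.Adj] (β : ℝ) (H : Finset (Sym2 V)) :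
    percWeight G β H = β ^ H.card * (1 - β) ^ (G.edgeFinset.card - H.card) := by
  rw [percWeight]
  have h : ∀ (i1 i2 : Fintype G.edgeSet),
      (@Set.toFinset _ G.edgeSet i1).card = (@Set.toFinset _ G.edgeSet i2).card := by
    intro i1 i2
    rw [Set.toFinset_card, Set.toFinset_card]
    exact @Fintype.card_congr' _ _ i1 i2 rfl
  rw [SimpleGraph.edgeFinset, SimpleGraph.edgeFinset, h _ _]

lemma powerset_toFinset (G : SimpleGraph V) [DecidableRel G.Adj] (i : Fintype G.edgeSet) :
    (@SimpleGraph.edgeFinset V G i).powerset = G.edgeFinset.powerset := by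
  have h : (@SimpleGraph.edgeFinset V G i) = G.edgeFinset := by
    ext e
    simp [SimpleGraph.mem_edgeFinset]
  rw [h]

open scoped Classical in
lemma expectedFinalSize_def (G : SimpleGraph V) (β : ℝ) (I : Finset V) :
    expectedFinalSize G β I
      = ∑ H ∈ G.edgeFinset.powerset, percWeight G β H * ((reachedSet G H I).card : ℝ) := rfl

lemma expectedFinalSize_eq (G : SimpleGraph V) [DecidableRel G.Adj] (β : ℝ) (I : Finset V) :
    expectedFinalSize G β I = ∑ H ∈ G.edgeFinset.powerset,
      percWeight G β H * ((reachedSet G H I).card : ℝ) := by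
  rw [expectedFinalSize_def]
  refine Finset.sum_congr ?_ (fun H _ => rfl)
  ext H
  simp only [Finset.mem_powerset]
  constructor <;> intro h e he <;> have := h he <;>
    simpa [SimpleGraph.mem_edgeFinset] using this

lemma perc_le (G : SimpleGraph V) (H : Finset (Sym2 V)) : percSubgraph G H ≤ G :=
  fun _ _ hab => hab.1

lemma perc_edge_mem (G : SimpleGraph V) (H : Finset (Sym2 V)) {e : Sym2 V}
    (he : e ∈ (percSubgraph G H).edgeSet) : e ∈ H := by
  induction e using Sym2.ind with
  | _ a b => exact he.2

open scoped Classical in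
lemma indicator_le (G : SimpleGraph V) [DecidableRel G.Adj] (H : Finset (Sym2 V))
    (I : Finset V) (v : V) :
    (if v ∈ reachedSet G H I then (1:ℝ) else 0)
      ≤ ∑ u ∈ I, ∑ k ∈ Finset.range (Fintype.card V),
          ∑ p : {p : G.Walk u v // p.length = k},
            (if (p.1.IsPath ∧ p.1.edges.toFinset ⊆ H) then (1:ℝ) else 0) := by
  have hnn0 : ∀ (u : V) (k : ℕ),
      (0:ℝ) ≤ ∑ p : {p : G.Walk u v // p.length = k},
        (if (p.1.IsPath ∧ p.1.edges.toFinset ⊆ H) then (1:ℝ) else 0) :=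
    fun u k => Finset.sum_nonneg fun p _ => by split_ifs <;> norm_num
  split_ifs with hv
  · rw [reachedSet, Finset.mem_filter] at hv
    obtain ⟨-, u, hu, hr⟩ := hv
    obtain ⟨p0⟩ := hr
    have hp1 : p0.bypass.IsPath := p0.bypass_isPath
    set p1 := p0.bypass with hp1def
    have hsub : ∀ e ∈ p1.edges, e ∈ G.edgeSet :=
      fun e he => SimpleGraph.edgeSet_mono (perc_le G H) (p1.edges_subset_edgeSet he)
    set p2 := p1.transfer G hsub with hp2def
    have hp2 : p2.IsPath := hp1.transfer hsub
    have hlen : p2.length < Fintype.card V := hp2.length_lt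
    have hedges : p2.edges.toFinset ⊆ H := by
      intro e he
      rw [List.mem_toFinset, hp2def, p1.edges_transfer hsub] at he
      exact perc_edge_mem G H (p1.edges_subset_edgeSet he)
    have t3 : (1:ℝ) ≤ ∑ p : {p : G.Walk u v // p.length = p2.length},
        (if (p.1.IsPath ∧ p.1.edges.toFinset ⊆ H) then (1:ℝ) else 0) := by
      have h1 : (if ((⟨p2, rfl⟩ : {p : G.Walk u v // p.length = p2.length}).1.IsPath ∧
          (⟨p2, rfl⟩ : {p : G.Walk u v // p.length = p2.length}).1.edges.toFinset ⊆ H)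
          then (1:ℝ) else 0) = 1 := if_pos ⟨hp2, hedges⟩
      calc (1:ℝ) = _ := h1.symm
        _ ≤ _ := Finset.single_le_sum
            (f := fun p : {p : G.Walk u v // p.length = p2.length} =>
              if (p.1.IsPath ∧ p.1.edges.toFinset ⊆ H) then (1:ℝ) else 0)
            (fun p _ => by split_ifs <;> norm_num) (Finset.mem_univ (⟨p2, rfl⟩ : {p : G.Walk u v // p.length = p2.length}))
    have t2 : (1:ℝ) ≤ ∑ k ∈ Finset.range (Fintype.card V),
        ∑ p : {p : G.Walk u v // p.length = k},
          (if (p.1.IsPath ∧ p.1.edges.toFinset ⊆ H) then (1:ℝ) else 0) :=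
      t3.trans (Finset.single_le_sum (fun k _ => hnn0 u k) (Finset.mem_range.mpr hlen))
    exact t2.trans (Finset.single_le_sum
      (fun u _ => Finset.sum_nonneg fun k _ => hnn0 u k) hu)
  · exact Finset.sum_nonneg fun u _ => Finset.sum_nonneg fun k _ => hnn0 u k

open scoped Classical in
lemma walk_weight (G : SimpleGraph V) [DecidableRel G.Adj] (β : ℝ) (hβ0 : 0 ≤ β)
    {u v : V} {k : ℕ} (p : G.Walk u v) (hp : p.length = k) :
    ∑ H ∈ G.edgeFinset.powerset,
        percWeight G β H * (if (p.IsPath ∧ p.edges.toFinset ⊆ H) then (1:ℝ) else 0)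
      ≤ β ^ k := by
  by_cases hpath : p.IsPath
  · have hS : p.edges.toFinset ⊆ G.edgeFinset := fun e he =>
      SimpleGraph.mem_edgeFinset.mpr (p.edges_subset_edgeSet (List.mem_toFinset.mp he))
    have hcard : p.edges.toFinset.card = k := by
      rw [List.toFinset_card_of_nodup hpath.edges_nodup, p.length_edges, hp]
    have key := aux_sum_w_superset β G.edgeFinset p.edges.toFinset hS
    rw [hcard] at key
    calc ∑ H ∈ G.edgeFinset.powerset,
          percWeight G β H * (if (p.IsPath ∧ p.edges.toFinset ⊆ H) then (1:ℝ) else 0)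
        = ∑ H ∈ G.edgeFinset.powerset,
          (β ^ H.card * (1 - β) ^ (G.edgeFinset.card - H.card))
            * (if p.edges.toFinset ⊆ H then (1:ℝ) else 0) := by
          refine Finset.sum_congr rfl fun H _ => ?_
          rw [percWeight_eq]
          congr 1
          simp [hpath]
      _ = β ^ k := key
      _ ≤ β ^ k := le_rfl
  · have hzero : ∀ H ∈ G.edgeFinset.powerset,
        percWeight G β H * (if (p.IsPath ∧ p.edges.toFinset ⊆ H) then (1:ℝ) else 0) = 0 := by
      intro H _
      rw [if_neg (fun h => hpath h.1), mul_zero]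
    rw [Finset.sum_congr rfl hzero, Finset.sum_const_zero]
    exact pow_nonneg hβ0 k


/-- If `β λ₁ < 1`, then the expected final size of the Reed–Frost epidemic is at most
`√(n |X(0)|) / (1 - β λ₁)`. -/
theorem expectedFinalSize_le_sqrt_of_spectral
    (G : SimpleGraph V) [DecidableRel G.Adj]
    (β : ℝ) (hβ0 : 0 ≤ β) (hβ1 : β ≤ 1)
    (hA : (G.adjMatrix ℝ).IsHermitian) (lam1 : ℝ)
    (hmax : ∀ v, hA.eigenvalues v ≤ lam1) (hmem : ∃ v, hA.eigenvalues v = lam1)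
    (hthr : β * lam1 < 1)
    (I : Finset V) (hI : I.Nonempty) :
    expectedFinalSize G β I
      ≤ Real.sqrt ((Fintype.card V : ℝ) * (I.card : ℝ)) / (1 - β * lam1) := by
  set A := G.adjMatrix ℝ with hAdef
  have hnn : ∀ i j, 0 ≤ A i j := fun i j => by
    rw [hAdef]; simp only [SimpleGraph.adjMatrix_apply]; split_ifs <;> norm_num
  obtain ⟨v0, hv0⟩ := hI
  have hlam0 : 0 ≤ lam1 := by
    have h := aux_rayleigh hA hmax (Pi.single v0 1)
    have h1 : (Pi.single v0 1 : V → ℝ) ⬝ᵥ (A *ᵥ Pi.single v0 1) = 0 := by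
      simp [hAdef, single_dotProduct, Matrix.mulVec, dotProduct_single,
        SimpleGraph.adjMatrix_apply]
    have h2 : (Pi.single v0 1 : V → ℝ) ⬝ᵥ (Pi.single v0 1 : V → ℝ) = 1 := by
      simp [single_dotProduct]
    rw [h1, h2, mul_one] at h
    exact h
  have habs : ∀ j, |hA.eigenvalues j| ≤ lam1 := aux_perron hA hnn hmax
  set xI : V → ℝ := fun u => if u ∈ I then 1 else 0 with hxIdef
  set y1 : V → ℝ := fun _ => 1 with hy1def
  have hxx : xI ⬝ᵥ xI = (I.card : ℝ) := by
    have h : ∀ u, xI u * xI u = if u ∈ I then (1:ℝ) else 0 := fun u => by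
      by_cases h : u ∈ I <;> simp [hxIdef, h]
    rw [dotProduct, Finset.sum_congr rfl fun u _ => h u, Finset.sum_ite_mem,
      Finset.univ_inter, Finset.sum_const, nsmul_eq_mul, mul_one]
  have hyy : y1 ⬝ᵥ y1 = ((Fintype.card V : ℕ) : ℝ) := by
    simp [dotProduct, hy1def]
  have hdot : ∀ k : ℕ, ∑ u ∈ I, ∑ v, (A ^ k) u v = xI ⬝ᵥ ((A ^ k) *ᵥ y1) := by
    intro k
    rw [dotProduct]
    have h : ∀ u, xI u * ((A ^ k) *ᵥ y1) u = if u ∈ I then (∑ v, (A ^ k) u v) else 0 := by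
      intro u
      by_cases h : u ∈ I <;> simp [hxIdef, hy1def, h, Matrix.mulVec, dotProduct]
    rw [Finset.sum_congr rfl fun u _ => h u, Finset.sum_ite_mem, Finset.univ_inter]
  have hw0 : ∀ H, 0 ≤ percWeight G β H := fun H => by
    rw [percWeight_eq]
    exact mul_nonneg (pow_nonneg hβ0 _) (pow_nonneg (by linarith) _)
  calc expectedFinalSize G β I
      = ∑ H ∈ G.edgeFinset.powerset, percWeight G β H
          * ∑ v, (if v ∈ reachedSet G H I then (1:ℝ) else 0) := by
        rw [expectedFinalSize_eq]
        refine Finset.sum_congr rfl fun H _ => ?_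
        congr 1
        rw [Finset.sum_ite_mem, Finset.univ_inter, Finset.sum_const, nsmul_eq_mul, mul_one]
    _ ≤ ∑ H ∈ G.edgeFinset.powerset, percWeight G β H
          * ∑ v, ∑ u ∈ I, ∑ k ∈ Finset.range (Fintype.card V),
              ∑ p : {p : G.Walk u v // p.length = k},
                (if (p.1.IsPath ∧ p.1.edges.toFinset ⊆ H) then (1:ℝ) else 0) := by
        refine Finset.sum_le_sum fun H _ => mul_le_mul_of_nonneg_left
          (Finset.sum_le_sum fun v _ => indicator_le G H I v) (hw0 H)
    _ = ∑ v, ∑ u ∈ I, ∑ k ∈ Finset.range (Fintype.card V),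
          ∑ p : {p : G.Walk u v // p.length = k},
            ∑ H ∈ G.edgeFinset.powerset, percWeight G β H
              * (if (p.1.IsPath ∧ p.1.edges.toFinset ⊆ H) then (1:ℝ) else 0) := by
        simp_rw [Finset.mul_sum]
        rw [Finset.sum_comm]
        refine Finset.sum_congr rfl fun v _ => ?_
        rw [Finset.sum_comm]
        refine Finset.sum_congr rfl fun u _ => ?_
        rw [Finset.sum_comm]
        refine Finset.sum_congr rfl fun k _ => ?_
        rw [Finset.sum_comm]
    _ ≤ ∑ v, ∑ u ∈ I, ∑ k ∈ Finset.range (Fintype.card V),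
          ∑ p : {p : G.Walk u v // p.length = k}, β ^ k := by
        refine Finset.sum_le_sum fun v _ => Finset.sum_le_sum fun u _ =>
          Finset.sum_le_sum fun k _ => Finset.sum_le_sum fun p _ => ?_
        exact walk_weight G β hβ0 p.1 p.2
    _ = ∑ k ∈ Finset.range (Fintype.card V), β ^ k * (xI ⬝ᵥ ((A ^ k) *ᵥ y1)) := by
        have hcount : ∀ (u v : V) (k : ℕ),
            (∑ _p : {p : G.Walk u v // p.length = k}, (β:ℝ) ^ k) = (A ^ k) u v * β ^ k := by
          intro u v k
          rw [Finset.sum_const, Finset.card_univ, nsmul_eq_mul]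
          congr 1
          rw [hAdef]
          exact_mod_cast (G.adjMatrix_pow_apply_eq_card_walk k u v).symm
        rw [Finset.sum_congr rfl (fun v _ => Finset.sum_congr rfl (fun u _ =>
          Finset.sum_congr rfl (fun k _ => hcount u v k)))]
        rw [Finset.sum_comm]
        rw [Finset.sum_congr rfl (fun u _ => Finset.sum_comm)]
        rw [Finset.sum_comm]
        refine Finset.sum_congr rfl fun k _ => ?_
        rw [← hdot k, Finset.mul_sum]
        refine Finset.sum_congr rfl fun u _ => ?_
        rw [Finset.mul_sum]
        exact Finset.sum_congr rfl fun v _ => mul_comm _ _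
    _ ≤ ∑ k ∈ Finset.range (Fintype.card V),
          β ^ k * (lam1 ^ k * (Real.sqrt (I.card : ℝ) * Real.sqrt (Fintype.card V : ℝ))) := by
        refine Finset.sum_le_sum fun k _ => mul_le_mul_of_nonneg_left ?_ (pow_nonneg hβ0 k)
        have h := aux_spec_bound hA hlam0 habs k xI y1
        rwa [hxx, hyy] at h
    _ = (∑ k ∈ Finset.range (Fintype.card V), (β * lam1) ^ k)
          * Real.sqrt ((Fintype.card V : ℝ) * (I.card : ℝ)) := by
        rw [Finset.sum_mul]
        refine Finset.sum_congr rfl fun k _ => ?_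
        rw [mul_pow, Real.sqrt_mul (Nat.cast_nonneg _)]
        ring
    _ ≤ (1 / (1 - β * lam1)) * Real.sqrt ((Fintype.card V : ℝ) * (I.card : ℝ)) := by
        refine mul_le_mul_of_nonneg_right ?_ (Real.sqrt_nonneg _)
        have hr0 : 0 ≤ β * lam1 := mul_nonneg hβ0 hlam0
        have h1r : 0 < 1 - β * lam1 := by linarith
        rw [le_div_iff₀ h1r]
        calc (∑ k ∈ Finset.range (Fintype.card V), (β * lam1) ^ k) * (1 - β * lam1)
            = -((∑ k ∈ Finset.range (Fintype.card V), (β * lam1) ^ k) * (β * lam1 - 1)) := by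
              ring
          _ = -((β * lam1) ^ (Fintype.card V) - 1) := by rw [geom_sum_mul]
          _ = 1 - (β * lam1) ^ (Fintype.card V) := by ring
          _ ≤ 1 := by
              have := pow_nonneg hr0 (Fintype.card V)
              linarith
    _ = Real.sqrt ((Fintype.card V : ℝ) * (I.card : ℝ)) / (1 - β * lam1) := by
        ring

end VirusSpread
end

section
/- Let G = (V,E) be a finite d-regular simple graph on n vertices with adjacency matrix A and largest adjacency eigenvalue λ₁ (so λ₁ = d). Let β ∈ [0,1] satisfy βλ₁ < 1, and let I ⊆ V be a nonempty set of initially infected vertices, |X(0)| = |I|. Then the expected final size of the Reed-Frost epidemic satisfies E[|Y(∞)|] ≤ |X(0)| / (1 − βλ₁). -/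
open Finset

namespace VirusSpread

variable {V : Type*} [Fintype V] [DecidableEq V]

/-! ### Auxiliary lemmas -/

open scoped Classical in
lemma sum_weight_powerset (E0 : Finset (Sym2 V)) (β : ℝ) :
    ∑ H ∈ E0.powerset, β ^ H.card * (1 - β) ^ (E0.card - H.card) = 1 := by
  have h : (1:ℝ) ^ E0.card = ∑ t ∈ E0.powerset, β ^ t.card * (1 - β) ^ (E0 \ t).card := by
    calc (1:ℝ) ^ E0.card = ∏ _i ∈ E0, (β + (1 - β)) := by
          rw [Finset.prod_const]; norm_num
      _ = ∑ t ∈ E0.powerset, (∏ _i ∈ t, β) * ∏ _i ∈ E0 \ t, (1 - β) :=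
          Finset.prod_add _ _ _
      _ = ∑ t ∈ E0.powerset, β ^ t.card * (1 - β) ^ (E0 \ t).card := by
          simp [Finset.prod_const]
  rw [one_pow] at h
  conv_rhs => rw [h]
  exact Finset.sum_congr rfl fun t ht => by
    rw [Finset.card_sdiff_of_subset (Finset.mem_powerset.mp ht)]

open scoped Classical in
lemma sum_weight_filter_subset (β : ℝ) {E0 S : Finset (Sym2 V)} (hS : S ⊆ E0) :
    ∑ H ∈ E0.powerset.filter (fun H => S ⊆ H),
      β ^ H.card * (1 - β) ^ (E0.card - H.card) = β ^ S.card := by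
  have key : ∑ H ∈ E0.powerset.filter (fun H => S ⊆ H),
      β ^ H.card * (1 - β) ^ (E0.card - H.card)
      = ∑ T ∈ (E0 \ S).powerset,
          β ^ (S.card + T.card) * (1 - β) ^ ((E0 \ S).card - T.card) := by
    refine Finset.sum_nbij' (fun H => H \ S) (fun T => S ∪ T) ?_ ?_ ?_ ?_ ?_
    · intro H hH
      simp only [Finset.mem_filter, Finset.mem_powerset] at hH ⊢
      exact Finset.sdiff_subset_sdiff hH.1 (le_refl S)
    · intro T hT
      simp only [Finset.mem_filter, Finset.mem_powerset] at hT ⊢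
      constructor
      · exact Finset.union_subset (hS) ((hT.trans (Finset.sdiff_subset)))
      · exact Finset.subset_union_left
    · intro H hH
      simp only [Finset.mem_filter, Finset.mem_powerset] at hH
      exact Finset.union_sdiff_of_subset hH.2
    · intro T hT
      simp only [Finset.mem_powerset] at hT
      exact Finset.union_sdiff_cancel_left (Finset.disjoint_left.mpr
        (fun a ha hb => (Finset.mem_sdiff.mp (hT hb)).2 ha))
    · intro H hH
      simp only [Finset.mem_filter, Finset.mem_powerset] at hH
      have h1 : S.card ≤ H.card := Finset.card_le_card hH.2
      have h2 : H.card ≤ E0.card := Finset.card_le_card hH.1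
      have h3 : (H \ S).card = H.card - S.card := Finset.card_sdiff_of_subset hH.2
      have h4 : (E0 \ S).card = E0.card - S.card := Finset.card_sdiff_of_subset hS
      congr 1
      · congr 1
        omega
      · congr 1
        omega
  rw [key]
  have : ∀ T ∈ (E0 \ S).powerset,
      β ^ (S.card + T.card) * (1 - β) ^ ((E0 \ S).card - T.card)
      = β ^ S.card * (β ^ T.card * (1 - β) ^ ((E0 \ S).card - T.card)) := by
    intro T _
    rw [pow_add, mul_assoc]
  rw [Finset.sum_congr rfl this, ← Finset.mul_sum, sum_weight_powerset, mul_one]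

open scoped Classical in
lemma sum_ite_percWeight (G : SimpleGraph V) (β : ℝ) {S : Finset (Sym2 V)}
    (hS : S ⊆ G.edgeFinset) :
    ∑ H ∈ G.edgeFinset.powerset, (if S ⊆ H then percWeight G β H else 0)
      = β ^ S.card := by
  rw [← Finset.sum_filter]
  simp only [percWeight]
  exact sum_weight_filter_subset β hS

lemma sum_card_walkLength (G : SimpleGraph V) [DecidableRel G.Adj] {d : ℕ}
    (hreg : G.IsRegularOfDegree d) (k : ℕ) (u : V) :
    ∑ v : V, (G.finsetWalkLength k u v).card = d ^ k := by
  have hA : ∀ (m : ℕ) (a b : V),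
      ((G.adjMatrix ℕ) ^ m) a b = (G.finsetWalkLength m a b).card := by
    intro m a b
    rw [SimpleGraph.adjMatrix_pow_apply_eq_card_walk, SimpleGraph.card_set_walk_length_eq]
    rfl
  have hrow : ∀ w : V, ∑ v : V, G.adjMatrix ℕ w v = d := by
    intro w
    simp only [SimpleGraph.adjMatrix_apply, Finset.sum_boole, Nat.cast_id]
    rw [← SimpleGraph.neighborFinset_eq_filter]
    exact hreg w
  have hsum : ∀ (m : ℕ) (a : V), ∑ v : V, ((G.adjMatrix ℕ) ^ m) a v = d ^ m := by
    intro m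
    induction m with
    | zero => intro a; simp [Matrix.one_apply]
    | succ m ih =>
      intro a
      rw [pow_succ]
      simp only [Matrix.mul_apply]
      rw [Finset.sum_comm]
      calc ∑ j : V, ∑ v : V, ((G.adjMatrix ℕ) ^ m) a j * G.adjMatrix ℕ j v
          = ∑ j : V, ((G.adjMatrix ℕ) ^ m) a j * ∑ v : V, G.adjMatrix ℕ j v := by
            simp only [Finset.mul_sum]
        _ = ∑ j : V, ((G.adjMatrix ℕ) ^ m) a j * d := by
            refine Finset.sum_congr rfl fun j _ => ?_
            rw [hrow j]
        _ = (∑ j : V, ((G.adjMatrix ℕ) ^ m) a j) * d := by rw [Finset.sum_mul]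
        _ = d ^ m * d := by rw [ih a]
        _ = d ^ (m + 1) := by rw [pow_succ]
  rw [← hsum k u]
  exact Finset.sum_congr rfl fun v _ => (hA k u v).symm


open scoped Classical in
lemma one_le_cnt (G : SimpleGraph V) {H : Finset (Sym2 V)} {I : Finset V} {v : V}
    (hv : v ∈ reachedSet G H I) :
    (1 : ℝ) ≤ ∑ u ∈ I, ∑ k ∈ Finset.range (Fintype.card V), ∑ p ∈ G.finsetWalkLength k u v,
      (if p.IsPath ∧ p.edges.toFinset ⊆ H then (1 : ℝ) else 0) := by
  simp only [reachedSet, Finset.mem_filter] at hv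
  obtain ⟨-, u, hu, hre⟩ := hv
  obtain ⟨w0⟩ := hre
  set p : (percSubgraph G H).Path u v := w0.toPath with hp
  have hle : percSubgraph G H ≤ G := fun a b hab => (show G.Adj a b ∧ s(a, b) ∈ H from hab).1
  set q : G.Walk u v := SimpleGraph.Walk.mapLe hle p.1 with hq
  have hqpath : q.IsPath := (SimpleGraph.Walk.mapLe_isPath hle).mpr p.2
  have hqlen : q.length = p.1.length := SimpleGraph.Walk.length_map _ _
  have hlt : q.length < Fintype.card V := by
    rw [hqlen]; exact p.2.length_lt
  have hqmem : q ∈ G.finsetWalkLength q.length u v :=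
    SimpleGraph.mem_finsetWalkLength_iff.mpr rfl
  have hedges : q.edges.toFinset ⊆ H := by
    intro e he
    rw [List.mem_toFinset] at he
    have he' : e ∈ p.1.edges := by
      have hqe : q.edges = p.1.edges.map (Sym2.map id) := SimpleGraph.Walk.edges_map _ _
      simpa [hqe, Sym2.map_id] using he
    have hE : e ∈ (percSubgraph G H).edgeSet := p.1.edges_subset_edgeSet he'
    revert hE
    refine Sym2.ind (f := fun e => e ∈ (percSubgraph G H).edgeSet → e ∈ H)
      (fun a b hE => (show G.Adj a b ∧ s(a, b) ∈ H from (SimpleGraph.mem_edgeSet _).mp hE).2) e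
  have hnn : ∀ (u' v' : V) (k : ℕ) (p' : G.Walk u' v'),
      (0:ℝ) ≤ (if p'.IsPath ∧ p'.edges.toFinset ⊆ H then (1:ℝ) else 0) := by
    intro _ _ _ _; split <;> norm_num
  have t3 : (1 : ℝ) ≤ ∑ p' ∈ G.finsetWalkLength q.length u v,
      (if p'.IsPath ∧ p'.edges.toFinset ⊆ H then (1 : ℝ) else 0) := by
    have := Finset.single_le_sum
      (f := fun p' : G.Walk u v => if p'.IsPath ∧ p'.edges.toFinset ⊆ H then (1:ℝ) else 0)
      (fun i _ => hnn u v q.length i) hqmem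
    simpa [hqpath, hedges] using this
  have t2 : (1 : ℝ) ≤ ∑ k ∈ Finset.range (Fintype.card V), ∑ p' ∈ G.finsetWalkLength k u v,
      (if p'.IsPath ∧ p'.edges.toFinset ⊆ H then (1 : ℝ) else 0) := by
    refine t3.trans (Finset.single_le_sum
      (f := fun k => ∑ p' ∈ G.finsetWalkLength k u v,
        (if p'.IsPath ∧ p'.edges.toFinset ⊆ H then (1:ℝ) else 0))
      (fun k _ => Finset.sum_nonneg fun p' _ => hnn u v k p')
      (Finset.mem_range.mpr hlt))
  refine t2.trans (Finset.single_le_sum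
    (f := fun u' => ∑ k ∈ Finset.range (Fintype.card V), ∑ p' ∈ G.finsetWalkLength k u' v,
      (if p'.IsPath ∧ p'.edges.toFinset ⊆ H then (1:ℝ) else 0))
    (fun u' _ => Finset.sum_nonneg fun k _ => Finset.sum_nonneg fun p' _ => hnn u' v k p') hu)

open scoped Classical in
lemma expectedFinalSize_le_geom (G : SimpleGraph V) {d : ℕ} (hreg : G.IsRegularOfDegree d)
    (β : ℝ) (hβ0 : 0 ≤ β) (hβ1 : β ≤ 1) (I : Finset V) :
    expectedFinalSize G β I
      ≤ (I.card : ℝ) * ∑ k ∈ Finset.range (Fintype.card V), (β * d) ^ k := by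
  have hWnn : ∀ H, 0 ≤ percWeight G β H := fun H =>
    mul_nonneg (pow_nonneg hβ0 _) (pow_nonneg (by linarith) _)
  rw [expectedFinalSize]
  calc ∑ H ∈ G.edgeFinset.powerset, percWeight G β H * ((reachedSet G H I).card : ℝ)
      = ∑ H ∈ G.edgeFinset.powerset, ∑ v : V,
          percWeight G β H * (if v ∈ reachedSet G H I then (1:ℝ) else 0) := by
        refine Finset.sum_congr rfl fun H _ => ?_
        rw [← Finset.mul_sum]
        congr 1
        simp [Finset.sum_boole, Finset.filter_mem_eq_inter]
    _ ≤ ∑ H ∈ G.edgeFinset.powerset, ∑ v : V, percWeight G β H *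
          (∑ u ∈ I, ∑ k ∈ Finset.range (Fintype.card V), ∑ p ∈ G.finsetWalkLength k u v,
            (if p.IsPath ∧ p.edges.toFinset ⊆ H then (1:ℝ) else 0)) := by
        refine Finset.sum_le_sum fun H _ => Finset.sum_le_sum fun v _ => ?_
        refine mul_le_mul_of_nonneg_left ?_ (hWnn H)
        by_cases hv : v ∈ reachedSet G H I
        · rw [if_pos hv]; exact one_le_cnt G hv
        · rw [if_neg hv]
          refine Finset.sum_nonneg fun u _ => Finset.sum_nonneg fun k _ =>
            Finset.sum_nonneg fun p _ => ?_
          split <;> norm_num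
    _ = ∑ v : V, ∑ u ∈ I, ∑ k ∈ Finset.range (Fintype.card V),
          ∑ p ∈ G.finsetWalkLength k u v, ∑ H ∈ G.edgeFinset.powerset,
          (if p.IsPath then (if p.edges.toFinset ⊆ H then percWeight G β H else 0) else 0) := by
        rw [Finset.sum_comm]
        refine Finset.sum_congr rfl fun v _ => ?_
        simp only [Finset.mul_sum]
        rw [Finset.sum_comm]
        refine Finset.sum_congr rfl fun u _ => ?_
        rw [Finset.sum_comm]
        refine Finset.sum_congr rfl fun k _ => ?_
        rw [Finset.sum_comm]
        refine Finset.sum_congr rfl fun p _ => Finset.sum_congr rfl fun H _ => ?_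
        rw [mul_ite, mul_one, mul_zero, ite_and]
    _ = ∑ v : V, ∑ u ∈ I, ∑ k ∈ Finset.range (Fintype.card V),
          ∑ p ∈ G.finsetWalkLength k u v, (if p.IsPath then β ^ k else 0) := by
        refine Finset.sum_congr rfl fun v _ => Finset.sum_congr rfl fun u _ =>
          Finset.sum_congr rfl fun k _ => Finset.sum_congr rfl fun p hp => ?_
        by_cases hpath : p.IsPath
        · simp only [hpath, if_true]
          have hsub : p.edges.toFinset ⊆ G.edgeFinset := by
            intro e he
            rw [List.mem_toFinset] at he
            exact SimpleGraph.mem_edgeFinset.mpr (p.edges_subset_edgeSet he)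
          rw [sum_ite_percWeight G β hsub]
          congr 1
          rw [List.toFinset_card_of_nodup hpath.isTrail.edges_nodup,
            SimpleGraph.Walk.length_edges]
          exact SimpleGraph.mem_finsetWalkLength_iff.mp hp
        · simp [hpath]
    _ ≤ ∑ v : V, ∑ u ∈ I, ∑ k ∈ Finset.range (Fintype.card V),
          ∑ p ∈ G.finsetWalkLength k u v, β ^ k := by
        refine Finset.sum_le_sum fun v _ => Finset.sum_le_sum fun u _ =>
          Finset.sum_le_sum fun k _ => Finset.sum_le_sum fun p _ => ?_
        split
        · exact le_refl _
        · positivity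
    _ = ∑ u ∈ I, ∑ k ∈ Finset.range (Fintype.card V), ∑ v : V,
          ((G.finsetWalkLength k u v).card : ℝ) * β ^ k := by
        rw [Finset.sum_comm]
        refine Finset.sum_congr rfl fun u _ => ?_
        rw [Finset.sum_comm]
        refine Finset.sum_congr rfl fun k _ => Finset.sum_congr rfl fun v _ => ?_
        rw [Finset.sum_const, nsmul_eq_mul]
    _ = ∑ u ∈ I, ∑ k ∈ Finset.range (Fintype.card V), (β * (d:ℝ)) ^ k := by
        refine Finset.sum_congr rfl fun u _ => Finset.sum_congr rfl fun k _ => ?_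
        rw [← Finset.sum_mul]
        have hv : ∑ v : V, ((G.finsetWalkLength k u v).card : ℝ) = ((d:ℝ))^k := by
          rw [← Nat.cast_sum, sum_card_walkLength G hreg k u, Nat.cast_pow]
        rw [hv, mul_pow]
        ring
    _ = (I.card : ℝ) * ∑ k ∈ Finset.range (Fintype.card V), (β * (d:ℝ)) ^ k := by
        rw [Finset.sum_const, nsmul_eq_mul]


set_option maxHeartbeats 1000000 in
/-- For a `d`-regular graph, if `β λ₁ < 1` then the expected final size of the Reed–Frost
epidemic is at most `|X(0)| / (1 - β λ₁)`. -/
theorem expectedFinalSize_le_of_spectral_regular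
    (G : SimpleGraph V) [DecidableRel G.Adj] (d : ℕ) (hreg : G.IsRegularOfDegree d)
    (β : ℝ) (hβ0 : 0 ≤ β) (hβ1 : β ≤ 1)
    (hA : (G.adjMatrix ℝ).IsHermitian) (lam1 : ℝ)
    (hmax : ∀ v, hA.eigenvalues v ≤ lam1) (hmem : ∃ v, hA.eigenvalues v = lam1)
    (hthr : β * lam1 < 1)
    (I : Finset V) (hI : I.Nonempty) :
    expectedFinalSize G β I ≤ (I.card : ℝ) / (1 - β * lam1) := by
  obtain ⟨v0, hv0⟩ := hI
  haveI : Nonempty V := ⟨v0⟩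
  -- `d ≤ lam1`
  have hdlam : (d : ℝ) ≤ lam1 := by
    have h1 : (G.adjMatrix ℝ).mulVec (Function.const V (1:ℝ)) = (d:ℝ) • Function.const V 1 := by
      funext v
      simp [hreg v]
    have hconst : Function.const V (1:ℝ) ≠ 0 := by
      intro h
      have := congrFun h (Classical.arbitrary V)
      simp [Function.const] at this
    have heig : Module.End.HasEigenvalue (Matrix.toLin' (G.adjMatrix ℝ)) (d:ℝ) :=
      Module.End.hasEigenvalue_of_hasEigenvector
        ⟨by rw [Module.End.mem_eigenspace_iff, Matrix.toLin'_apply, h1], hconst⟩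
    have hspec : (d:ℝ) ∈ spectrum ℝ (G.adjMatrix ℝ) := by
      rw [← AlgEquiv.spectrum_eq (Matrix.toLinAlgEquiv' (R := ℝ) (n := V))]
      exact Module.End.hasEigenvalue_iff_mem_spectrum.mp heig
    have hrange : spectrum ℝ (G.adjMatrix ℝ) = Set.range hA.eigenvalues := by
      exact hA.spectrum_real_eq_range_eigenvalues
    rw [hrange] at hspec
    obtain ⟨i, hi⟩ := hspec
    exact hi ▸ hmax i
  have hpos : 0 < 1 - β * lam1 := by linarith
  have hβd : β * (d:ℝ) ≤ β * lam1 := mul_le_mul_of_nonneg_left hdlam hβ0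
  -- geometric sum bound
  have hgeom : ∑ k ∈ Finset.range (Fintype.card V), (β * (d:ℝ)) ^ k
      ≤ 1 / (1 - β * lam1) := by
    have hx0 : (0:ℝ) ≤ β * d := by positivity
    have hS0 : (0:ℝ) ≤ ∑ k ∈ Finset.range (Fintype.card V), (β * (d:ℝ))^k :=
      Finset.sum_nonneg fun k _ => pow_nonneg hx0 k
    have hg := geom_sum_mul (β * (d:ℝ)) (Fintype.card V)
    have hpown : (0:ℝ) ≤ (β * (d:ℝ)) ^ (Fintype.card V) := pow_nonneg hx0 _
    rw [le_div_iff₀ hpos]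
    have hmul : (∑ k ∈ Finset.range (Fintype.card V), (β * (d:ℝ))^k) * (β*(d:ℝ))
        ≤ (∑ k ∈ Finset.range (Fintype.card V), (β * (d:ℝ))^k) * (β*lam1) :=
      mul_le_mul_of_nonneg_left hβd hS0
    nlinarith [hg, hpown, hS0, hmul]
  refine le_trans (expectedFinalSize_le_geom (d := d) G ?_ β hβ0 hβ1 I) ?_
  · intro v
    convert hreg v using 2
  · calc (I.card : ℝ) * ∑ k ∈ Finset.range (Fintype.card V), (β * (d:ℝ)) ^ k
        ≤ (I.card : ℝ) * (1 / (1 - β * lam1)) :=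
          mul_le_mul_of_nonneg_left hgeom (by positivity)
      _ = (I.card : ℝ) / (1 - β * lam1) := by ring

end VirusSpread
end

section
/- Let G be the complete graph on n vertices, fix c > 1, and let β = c/(n−1). Let γ ∈ (0,1) be the unique positive solution of γ + e^{−γc} = 1. Consider the Reed-Frost epidemic on G with infection probability β started from any nonempty initial set of infectives. Then for every ε > 0 there exists N such that for all n ≥ N, the expected final size of the epidemic satisfies E[|Y(∞)|] ≥ (γ² − ε)·n. -/
open Finset

namespace VirusSpread

variable {V : Type*} [Fintype V] [DecidableEq V]

open scoped Classical
set_option linter.unusedSectionVars false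

/-- Expectation of `f` under Bernoulli(β) product measure on subsets of `E`. -/
noncomputable def PW (β : ℝ) (E : Finset (Sym2 V)) (f : Finset (Sym2 V) → ℝ) : ℝ :=
  ∑ H ∈ E.powerset, β ^ H.card * (1 - β) ^ (E.card - H.card) * f H

lemma PW_empty (β : ℝ) (f : Finset (Sym2 V) → ℝ) : PW β ∅ f = f ∅ := by
  simp [PW]

lemma PW_insert (β : ℝ) {e : Sym2 V} {E : Finset (Sym2 V)} (he : e ∉ E)
    (f : Finset (Sym2 V) → ℝ) :
    PW β (insert e E) f
      = β * PW β E (fun H => f (insert e H)) + (1 - β) * PW β E f := by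
  classical
  unfold PW
  rw [powerset_insert, sum_union]
  · have h1 : ∑ H ∈ E.powerset.image (insert e),
        β ^ H.card * (1 - β) ^ ((insert e E).card - H.card) * f H
        = ∑ H ∈ E.powerset,
            β ^ (insert e H).card * (1 - β) ^ ((insert e E).card - (insert e H).card)
              * f (insert e H) := by
      refine sum_image ?_
      intro H₁ h₁ H₂ h₂ hins
      have he₁ : e ∉ H₁ := fun h => he (mem_powerset.mp h₁ h)
      have he₂ : e ∉ H₂ := fun h => he (mem_powerset.mp h₂ h)
      have : ∀ x, x ∈ H₁ ↔ x ∈ H₂ := by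
        intro x
        constructor <;> intro hx
        · have : x ∈ insert e H₂ := hins ▸ mem_insert_of_mem hx
          rcases mem_insert.mp this with rfl | h
          · exact absurd hx he₁
          · exact h
        · have : x ∈ insert e H₁ := hins ▸ mem_insert_of_mem hx
          rcases mem_insert.mp this with rfl | h
          · exact absurd hx he₂
          · exact h
      exact Finset.ext this
    rw [h1]
    have hcard : (insert e E).card = E.card + 1 := card_insert_of_notMem he
    have h2 : ∀ H ∈ E.powerset,
        β ^ (insert e H).card * (1 - β) ^ ((insert e E).card - (insert e H).card)
          * f (insert e H) = β * (β ^ H.card * (1 - β) ^ (E.card - H.card) * f (insert e H)) := by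
      intro H hH
      have heH : e ∉ H := fun h => he (mem_powerset.mp hH h)
      rw [card_insert_of_notMem heH, hcard]
      simp [pow_succ]
      ring
    have h3 : ∀ H ∈ E.powerset,
        β ^ H.card * (1 - β) ^ ((insert e E).card - H.card) * f H
          = (1 - β) * (β ^ H.card * (1 - β) ^ (E.card - H.card) * f H) := by
      intro H hH
      have hle : H.card ≤ E.card := card_le_card (mem_powerset.mp hH)
      rw [hcard, Nat.succ_sub hle]
      rw [pow_succ]
      ring
    rw [sum_congr rfl h2, sum_congr rfl h3, ← mul_sum, ← mul_sum]
    ring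
  · rw [Finset.disjoint_left]
    intro H hH hH'
    have heH : e ∉ H := fun h => he (mem_powerset.mp hH h)
    obtain ⟨H', _, rfl⟩ := mem_image.mp hH'
    exact heH (mem_insert_self e H')

lemma PW_congr {β : ℝ} {E : Finset (Sym2 V)} {f g : Finset (Sym2 V) → ℝ}
    (h : ∀ H ⊆ E, f H = g H) : PW β E f = PW β E g := by
  unfold PW
  exact sum_congr rfl fun H hH => by rw [h H (mem_powerset.mp hH)]

lemma PW_const (β : ℝ) (E : Finset (Sym2 V)) (r : ℝ) : PW β E (fun _ => r) = r := by
  classical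
  induction E using Finset.induction with
  | empty => simp [PW_empty]
  | insert _ _ he ih => rw [PW_insert _ he]; rw [ih]; ring

lemma PW_nonneg {β : ℝ} (hβ0 : 0 ≤ β) (hβ1 : β ≤ 1) {E : Finset (Sym2 V)}
    {f : Finset (Sym2 V) → ℝ} (hf : ∀ H ⊆ E, 0 ≤ f H) : 0 ≤ PW β E f := by
  have h1b : (0:ℝ) ≤ 1 - β := by linarith
  refine sum_nonneg fun H hH => ?_
  exact mul_nonneg (mul_nonneg (pow_nonneg hβ0 _) (pow_nonneg h1b _)) (hf H (mem_powerset.mp hH))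

lemma PW_mono {β : ℝ} (hβ0 : 0 ≤ β) (hβ1 : β ≤ 1) {E : Finset (Sym2 V)}
    {f g : Finset (Sym2 V) → ℝ} (hfg : ∀ H ⊆ E, f H ≤ g H) : PW β E f ≤ PW β E g := by
  refine sum_le_sum fun H hH => ?_
  have h1b : (0:ℝ) ≤ 1 - β := by linarith
  have h1 : (0:ℝ) ≤ β ^ H.card * (1 - β) ^ (E.card - H.card) :=
    mul_nonneg (pow_nonneg hβ0 _) (pow_nonneg h1b _)
  exact mul_le_mul_of_nonneg_left (hfg H (mem_powerset.mp hH)) h1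

lemma PW_split {β : ℝ} {E₁ E₂ : Finset (Sym2 V)} (hd : Disjoint E₁ E₂)
    (f : Finset (Sym2 V) → ℝ) :
    PW β (E₁ ∪ E₂) f = PW β E₁ (fun H₁ => PW β E₂ fun H₂ => f (H₁ ∪ H₂)) := by
  classical
  induction E₁ using Finset.induction generalizing f with
  | empty => simp [PW_empty]
  | @insert a E₁ ha ih =>
    have hd' : Disjoint E₁ E₂ := (Finset.disjoint_insert_left.mp hd).2
    have haE₂ : a ∉ E₂ := (Finset.disjoint_insert_left.mp hd).1
    have haU : a ∉ E₁ ∪ E₂ := by simp [ha, haE₂]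
    rw [Finset.insert_union, PW_insert _ haU, PW_insert _ ha, ih hd', ih hd']
    congr 2
    · refine PW_congr fun H₁ _ => PW_congr fun H₂ _ => ?_
      rw [Finset.insert_union]

lemma PW_add {β : ℝ} {E : Finset (Sym2 V)} (f g : Finset (Sym2 V) → ℝ) :
    PW β E (fun H => f H + g H) = PW β E f + PW β E g := by
  unfold PW; rw [← sum_add_distrib]; exact sum_congr rfl fun H _ => by ring

lemma PW_mul_const {β : ℝ} {E : Finset (Sym2 V)} (r : ℝ) (f : Finset (Sym2 V) → ℝ) :
    PW β E (fun H => r * f H) = r * PW β E f := by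
  unfold PW; rw [mul_sum]; exact sum_congr rfl fun H _ => by ring

lemma PW_restrict {β : ℝ} {E₀ E : Finset (Sym2 V)} (hE₀ : E₀ ⊆ E)
    (f g : Finset (Sym2 V) → ℝ) (h : ∀ H ⊆ E, f H = g (H ∩ E₀)) :
    PW β E f = PW β E₀ g := by
  classical
  have hU : E = E₀ ∪ (E \ E₀) := by rw [Finset.union_sdiff_of_subset hE₀]
  rw [hU, PW_split Finset.disjoint_sdiff f]
  refine PW_congr fun H₁ hH₁ => ?_
  have : (fun H₂ => f (H₁ ∪ H₂)) = fun H₂ : Finset (Sym2 V) =>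
      (fun H₂ => f (H₁ ∪ H₂)) H₂ := rfl
  have heq : ∀ H₂ ⊆ E \ E₀, f (H₁ ∪ H₂) = g H₁ := by
    intro H₂ hH₂
    have hsub : H₁ ∪ H₂ ⊆ E := by
      refine Finset.union_subset (hH₁.trans hE₀) (hH₂.trans (Finset.sdiff_subset))
    rw [h _ hsub]
    congr 1
    rw [Finset.union_inter_distrib_right, Finset.inter_eq_left.mpr hH₁]
    have : H₂ ∩ E₀ = ∅ := by
      rw [← Finset.disjoint_iff_inter_eq_empty]
      exact Finset.disjoint_sdiff.symm.mono_left (le_of_eq rfl) |>.mono_left hH₂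
    rw [this, Finset.union_empty]
  rw [PW_congr heq, PW_const]

lemma PW_couple {β β₁ β₂ : ℝ} (hβ : β = β₁ + β₂ - β₁ * β₂) (E : Finset (Sym2 V))
    (f : Finset (Sym2 V) → ℝ) :
    PW β E f = PW β₁ E (fun H₁ => PW β₂ E fun H₂ => f (H₁ ∪ H₂)) := by
  classical
  induction E using Finset.induction generalizing f with
  | empty => simp [PW_empty]
  | @insert e E he ih =>
    rw [PW_insert _ he, PW_insert _ he, ih, ih]
    have inner : ∀ H₁ ⊆ E, (PW β₂ (insert e E) fun H₂ => f (H₁ ∪ H₂))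
        = β₂ * PW β₂ E (fun H₂ => f (insert e (H₁ ∪ H₂)))
          + (1 - β₂) * PW β₂ E (fun H₂ => f (H₁ ∪ H₂)) := by
      intro H₁ _
      rw [PW_insert _ he]
      congr 1
      congr 1
      refine PW_congr fun H₂ _ => ?_
      rw [Finset.union_insert]
    have inner' : ∀ H₁ ⊆ E, (PW β₂ (insert e E) fun H₂ => f (insert e H₁ ∪ H₂))
        = β₂ * PW β₂ E (fun H₂ => f (insert e (H₁ ∪ H₂)))
          + (1 - β₂) * PW β₂ E (fun H₂ => f (insert e (H₁ ∪ H₂))) := by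
      intro H₁ _
      rw [PW_insert _ he]
      congr 1
      · congr 1
        refine PW_congr fun H₂ _ => ?_
        rw [Finset.insert_union, Finset.union_insert, Finset.insert_idem]
      · congr 1
        refine PW_congr fun H₂ _ => ?_
        rw [Finset.insert_union]
    rw [PW_congr inner', PW_congr inner]
    have e1 : ∀ (u v : Finset (Sym2 V) → ℝ),
        PW β₁ E (fun H₁ => β₂ * u H₁ + (1 - β₂) * v H₁)
          = β₂ * PW β₁ E u + (1 - β₂) * PW β₁ E v := by
      intro u v
      rw [PW_add, PW_mul_const, PW_mul_const]
    rw [e1, e1]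
    have hA := ih (fun H => f (insert e H))
    rw [hβ]
    ring
open scoped Classical
set_option linter.unusedSectionVars false

/-- one retained-edge step -/
def rel (H : Finset (Sym2 V)) (a b : V) : Prop := s(a, b) ∈ H ∧ a ≠ b

lemma rel_symm {H : Finset (Sym2 V)} : Symmetric (rel H) := by
  intro a b h
  exact ⟨by rw [Sym2.eq_swap]; exact h.1, h.2.symm⟩

lemma rel_mono {H H' : Finset (Sym2 V)} (h : H ⊆ H') {a b : V} (hr : rel H a b) :
    rel H' a b := ⟨h hr.1, hr.2⟩

/-- set of vertices reachable from `L` using retained edges `H` -/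
noncomputable def reach (H : Finset (Sym2 V)) (L : Finset V) : Finset V :=
  Finset.univ.filter fun v => ∃ l ∈ L, Relation.ReflTransGen (rel H) l v

lemma mem_reach {H : Finset (Sym2 V)} {L : Finset V} {v : V} :
    v ∈ reach H L ↔ ∃ l ∈ L, Relation.ReflTransGen (rel H) l v := by
  simp [reach]

lemma subset_reach (H : Finset (Sym2 V)) (L : Finset V) : L ⊆ reach H L := by
  intro l hl
  exact mem_reach.mpr ⟨l, hl, Relation.ReflTransGen.refl⟩

lemma reach_mono {H H' : Finset (Sym2 V)} (h : H ⊆ H') (L : Finset V) :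
    reach H L ⊆ reach H' L := by
  intro v hv
  obtain ⟨l, hl, hr⟩ := mem_reach.mp hv
  exact mem_reach.mpr ⟨l, hl, Relation.ReflTransGen.mono (fun a b => rel_mono h) _ _ hr⟩

/-- relevant edges: both endpoints in `W ∪ L`, at least one endpoint in `W`. -/
noncomputable def EWL (W L : Finset V) : Finset (Sym2 V) :=
  (⊤ : SimpleGraph V).edgeFinset.filter fun e =>
    (∀ x ∈ e, x ∈ W ∪ L) ∧ ∃ x ∈ e, x ∈ W

lemma mem_EWL {W L : Finset V} {a b : V} :
    s(a, b) ∈ EWL W L ↔ a ≠ b ∧ (a ∈ W ∪ L ∧ b ∈ W ∪ L) ∧ (a ∈ W ∨ b ∈ W) := by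
  simp only [EWL, mem_filter, SimpleGraph.mem_edgeFinset, SimpleGraph.mem_edgeSet,
    SimpleGraph.top_adj, Sym2.mem_iff]
  constructor
  · rintro ⟨hab, h1, x, hx, hxW⟩
    refine ⟨hab, ⟨h1 a (Or.inl rfl), h1 b (Or.inr rfl)⟩, ?_⟩
    rcases hx with rfl | rfl
    · exact Or.inl hxW
    · exact Or.inr hxW
  · rintro ⟨hab, ⟨ha, hb⟩, h⟩
    refine ⟨hab, ?_, ?_⟩
    · rintro x (rfl | rfl) <;> assumption
    · rcases h with h | h
      · exact ⟨a, Or.inl rfl, h⟩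
      · exact ⟨b, Or.inr rfl, h⟩

lemma EWL_insert {W L' : Finset V} {l : V} (hlW : l ∉ W) (hlL : l ∉ L') :
    EWL W (insert l L') = (W.image fun w => s(l, w)) ∪ EWL W L' := by
  ext e
  induction e using Sym2.ind with
  | _ a b =>
    rw [mem_union, mem_EWL, mem_EWL]
    constructor
    · rintro ⟨hab, ⟨ha, hb⟩, hW⟩
      by_cases hal : a = l
      · subst hal
        have hbW : b ∈ W := by
          rcases hW with h | h
          · exact absurd h hlW
          · exact h
        exact Or.inl (mem_image.mpr ⟨b, hbW, by rw [Sym2.eq_swap]⟩)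
      · by_cases hbl : b = l
        · subst hbl
          have haW : a ∈ W := by
            rcases hW with h | h
            · exact h
            · exact absurd h hlW
          exact Or.inl (mem_image.mpr ⟨a, haW, Sym2.eq_swap⟩)
        · refine Or.inr ⟨hab, ⟨?_, ?_⟩, hW⟩
          · rcases mem_union.mp ha with h | h
            · exact mem_union_left _ h
            · rcases mem_insert.mp h with h | h
              · exact absurd h hal
              · exact mem_union_right _ h
          · rcases mem_union.mp hb with h | h
            · exact mem_union_left _ h
            · rcases mem_insert.mp h with h | h
              · exact absurd h hbl
              · exact mem_union_right _ h
    · rintro (him | ⟨hab, ⟨ha, hb⟩, hW⟩)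
      · obtain ⟨w, hw, hsw⟩ := mem_image.mp him
        rw [Sym2.eq_iff] at hsw
        rcases hsw with ⟨rfl, rfl⟩ | ⟨rfl, rfl⟩
        · refine ⟨fun h => hlW (h ▸ hw), ⟨?_, ?_⟩, Or.inr hw⟩
          · exact mem_union_right _ (mem_insert_self _ _)
          · exact mem_union_left _ hw
        · refine ⟨fun h => hlW (h.symm ▸ hw), ⟨?_, ?_⟩, Or.inl hw⟩
          · exact mem_union_left _ hw
          · exact mem_union_right _ (mem_insert_self _ _)
      · refine ⟨hab, ⟨?_, ?_⟩, hW⟩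
        · rcases mem_union.mp ha with h | h
          · exact mem_union_left _ h
          · exact mem_union_right _ (mem_insert_of_mem h)
        · rcases mem_union.mp hb with h | h
          · exact mem_union_left _ h
          · exact mem_union_right _ (mem_insert_of_mem h)

lemma EWL_insert_disjoint {W L' : Finset V} {l : V} (hlW : l ∉ W) (hlL : l ∉ L') :
    Disjoint (W.image fun w => s(l, w)) (EWL W L') := by
  rw [Finset.disjoint_left]
  rintro e he he'
  obtain ⟨w, hw, rfl⟩ := mem_image.mp he
  have := (mem_EWL.mp he').2.1.1
  rcases mem_union.mp this with h | h
  · exact hlW h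
  · exact hlL h

lemma EWL_sub {W L' N : Finset V} (hN : N ⊆ W) :
    EWL (W \ N) (L' ∪ N) ⊆ EWL W L' := by
  intro e
  induction e using Sym2.ind with
  | _ a b =>
    intro h
    rw [mem_EWL] at h ⊢
    obtain ⟨hab, ⟨ha, hb⟩, hW⟩ := h
    have key : ∀ x : V, x ∈ (W \ N) ∪ (L' ∪ N) → x ∈ W ∪ L' := by
      intro x hx
      rcases mem_union.mp hx with h | h
      · exact mem_union_left _ (mem_sdiff.mp h).1
      · rcases mem_union.mp h with h | h
        · exact mem_union_right _ h
        · exact mem_union_left _ (hN h)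
    refine ⟨hab, ⟨key a ha, key b hb⟩, ?_⟩
    rcases hW with h | h
    · exact Or.inl (mem_sdiff.mp h).1
    · exact Or.inr (mem_sdiff.mp h).1

/-- edges with both endpoints inside the source set do not affect the reached set
outside the source set -/
lemma reach_drop_source {H D : Finset (Sym2 V)} {S : Finset V}
    (hD : ∀ e ∈ D, ∀ x ∈ e, x ∈ S) {A : Finset V} (hA : Disjoint A S) :
    A ∩ reach (H ∪ D) S = A ∩ reach H S := by
  apply Finset.Subset.antisymm
  · intro v hv
    obtain ⟨hvA, hvr⟩ := mem_inter.mp hv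
    obtain ⟨l, hl, hrtg⟩ := mem_reach.mp hvr
    -- invariant: every reached x is in S or H-reachable from S
    have key : ∀ x, Relation.ReflTransGen (rel (H ∪ D)) l x →
        x ∈ S ∨ ∃ y ∈ S, Relation.ReflTransGen (rel H) y x := by
      intro x hx
      induction hx with
      | refl => exact Or.inl hl
      | @tail b c hxy hstep ih =>
        rcases mem_union.mp hstep.1 with hH | hD'
        · rcases ih with h | ⟨y, hy, hr⟩
          · exact Or.inr ⟨b, h, Relation.ReflTransGen.single ⟨hH, hstep.2⟩⟩
          · exact Or.inr ⟨y, hy, hr.tail ⟨hH, hstep.2⟩⟩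
        · have : c ∈ S := hD _ hD' c (by rw [Sym2.mem_iff]; exact Or.inr rfl)
          exact Or.inl this
    rcases key v hrtg with h | ⟨y, hy, hr⟩
    · exact absurd h (Finset.disjoint_left.mp hA hvA)
    · exact mem_inter.mpr ⟨hvA, mem_reach.mpr ⟨y, hy, hr⟩⟩
  · intro v hv
    obtain ⟨h1, h2⟩ := mem_inter.mp hv
    exact mem_inter.mpr ⟨h1, reach_mono Finset.subset_union_left _ h2⟩

/-- The surgery identity for one exposure step. -/
lemma reach_step {W L' : Finset V} {l : V} (hlW : l ∉ W) (hlL : l ∉ L')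
    {Hl Hr : Finset (Sym2 V)} (hHl : Hl ⊆ W.image fun w => s(l, w))
    (hHr : Hr ⊆ EWL W L') :
    W ∩ reach (Hl ∪ Hr) (insert l L')
      = (W.filter fun w => s(l, w) ∈ Hl)
        ∪ ((W \ W.filter fun w => s(l, w) ∈ Hl) ∩ reach Hr (L' ∪ W.filter fun w => s(l, w) ∈ Hl)) := by
  set N := W.filter fun w => s(l, w) ∈ Hl with hN
  have hNW : N ⊆ W := filter_subset _ _
  apply Finset.Subset.antisymm
  · intro w hw
    obtain ⟨hwW, hwr⟩ := mem_inter.mp hw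
    obtain ⟨l₀, hl₀, hrtg⟩ := mem_reach.mp hwr
    -- invariant
    have key : ∀ x, Relation.ReflTransGen (rel (Hl ∪ Hr)) l₀ x →
        x = l ∨ ∃ y ∈ L' ∪ N, Relation.ReflTransGen (rel Hr) y x := by
      intro x hx
      induction hx with
      | refl =>
        rcases mem_insert.mp hl₀ with rfl | h
        · exact Or.inl rfl
        · exact Or.inr ⟨l₀, mem_union_left _ h, Relation.ReflTransGen.refl⟩
      | @tail b c hxy hstep ih =>
        rcases mem_union.mp hstep.1 with hHl' | hHr'
        · obtain ⟨w₀, hw₀, hsw⟩ := mem_image.mp (hHl hHl')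
          rw [Sym2.eq_iff] at hsw
          rcases hsw with ⟨hb, hc⟩ | ⟨hc, hb⟩
          · -- b = l, c = w₀ ∈ W, and s(l,c) ∈ Hl so c ∈ N
            have hcN : c ∈ N := mem_filter.mpr ⟨hc ▸ hw₀, by rw [hb]; exact hHl'⟩
            exact Or.inr ⟨c, mem_union_right _ hcN, Relation.ReflTransGen.refl⟩
          · -- c = l
            exact Or.inl hc.symm
        · -- step within Hr; b cannot be l
          have hbl : b ≠ l := by
            intro h
            subst h
            have hm := (mem_EWL.mp (hHr hHr')).2.1.1
            rcases mem_union.mp hm with h | h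
            · exact hlW h
            · exact hlL h
          rcases ih with h | ⟨y, hy, hr⟩
          · exact absurd h hbl
          · exact Or.inr ⟨y, hy, hr.tail ⟨hHr', hstep.2⟩⟩
    rcases key w hrtg with rfl | ⟨y, hy, hr⟩
    · exact absurd hwW hlW
    · by_cases hwN : w ∈ N
      · exact mem_union_left _ hwN
      · exact mem_union_right _ (mem_inter.mpr ⟨mem_sdiff.mpr ⟨hwW, hwN⟩,
          mem_reach.mpr ⟨y, hy, hr⟩⟩)
  · apply Finset.union_subset
    · intro w hw
      obtain ⟨hwW, hsl⟩ := mem_filter.mp hw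
      refine mem_inter.mpr ⟨hwW, mem_reach.mpr ⟨l, mem_insert_self _ _, ?_⟩⟩
      exact Relation.ReflTransGen.single ⟨mem_union_left _ hsl, fun h => hlW (h ▸ hwW)⟩
    · intro w hw
      obtain ⟨hwWN, hwr⟩ := mem_inter.mp hw
      obtain ⟨y, hy, hr⟩ := mem_reach.mp hwr
      refine mem_inter.mpr ⟨(mem_sdiff.mp hwWN).1, mem_reach.mpr ?_⟩
      have hr' : Relation.ReflTransGen (rel (Hl ∪ Hr)) y w :=
        Relation.ReflTransGen.mono (fun a b => rel_mono Finset.subset_union_right) _ _ hr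
      rcases mem_union.mp hy with h | h
      · exact ⟨y, mem_insert_of_mem h, hr'⟩
      · -- y ∈ N : prepend edge l-y
        obtain ⟨hyW, hsy⟩ := mem_filter.mp h
        refine ⟨l, mem_insert_self _ _, Relation.ReflTransGen.head ?_ hr'⟩
        exact ⟨mem_union_left _ hsy, fun hh => hlW (hh ▸ hyW)⟩

lemma PW_pow_card {β ρ : ℝ} (E : Finset (Sym2 V)) :
    PW β E (fun H => ρ ^ H.card) = (1 - β * (1 - ρ)) ^ E.card := by
  classical
  induction E using Finset.induction with
  | empty => simp [PW_empty]
  | @insert e E he ih =>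
    rw [PW_insert _ he, card_insert_of_notMem he]
    have h1 : PW β E (fun H => ρ ^ (insert e H).card) = ρ * PW β E (fun H => ρ ^ H.card) := by
      rw [← PW_mul_const]
      refine PW_congr fun H hH => ?_
      rw [card_insert_of_notMem (fun h => he (hH h)), pow_succ]
      ring
    rw [h1, ih, pow_succ]
    ring

lemma explore_main {β ρ : ℝ} (hβ0 : 0 ≤ β) (hβ1 : β ≤ 1) (hρ0 : 0 ≤ ρ) (hρ1 : ρ ≤ 1)
    (m : ℕ) (hfix : (1 - β * (1 - ρ)) ^ m ≤ ρ) :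
    ∀ n j : ℕ, ∀ W L : Finset V, j + L.card = n → Disjoint W L → m + j ≤ W.card →
      PW β (EWL W L) (fun H => if (W ∩ reach H L).card < j then (1:ℝ) else 0) ≤ ρ ^ L.card := by
  intro n
  induction n using Nat.strong_induction_on with
  | _ n ih =>
    intro j W L hn hd hWc
    rcases L.eq_empty_or_nonempty with rfl | ⟨l, hl⟩
    · simp only [card_empty, pow_zero]
      calc PW β (EWL W ∅) (fun H => if (W ∩ reach H ∅).card < j then (1:ℝ) else 0)
          ≤ PW β (EWL W ∅) (fun _ => 1) :=
            PW_mono hβ0 hβ1 (fun H _ => by split <;> norm_num)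
        _ = 1 := PW_const _ _ _
    · have hLins : L = insert l (L.erase l) := (insert_erase hl).symm
      set L' := L.erase l with hL'
      have hlL' : l ∉ L' := notMem_erase _ _
      have hlW : l ∉ W := fun h => (Finset.disjoint_left.mp hd h) hl
      have hdWL' : Disjoint W L' := hd.mono_right (erase_subset _ _)
      have hinj : Set.InjOn (fun w => s(l, w)) W := by
        intro a ha b hb hab
        simp only [Sym2.eq_iff] at hab
        rcases hab with ⟨_, h⟩ | ⟨h1, h2⟩
        · exact h
        · exact absurd (h2 ▸ ha) hlW
      have hElcard : (W.image fun w => s(l, w)).card = W.card := card_image_of_injOn hinj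
      rw [hLins, EWL_insert hlW hlL', PW_split (EWL_insert_disjoint hlW hlL')]
      have hbound : ∀ Hl ⊆ (W.image fun w => s(l, w)),
          (PW β (EWL W L') fun Hr =>
            if (W ∩ reach (Hl ∪ Hr) (insert l L')).card < j then (1:ℝ) else 0)
          ≤ ρ ^ (L'.card + Hl.card) := by
        intro Hl hHl
        set N := W.filter (fun w => s(l, w) ∈ Hl) with hNdef
        have hNW : N ⊆ W := filter_subset _ _
        have hNcard : N.card = Hl.card := by
          have himg : N.image (fun w => s(l, w)) = Hl := by
            apply Finset.Subset.antisymm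
            · intro e he'
              obtain ⟨w, hw, rfl⟩ := mem_image.mp he'
              exact (mem_filter.mp hw).2
            · intro e he'
              obtain ⟨w, hw, rfl⟩ := mem_image.mp (hHl he')
              exact mem_image.mpr ⟨w, mem_filter.mpr ⟨hw, he'⟩, rfl⟩
          rw [← himg, card_image_of_injOn (hinj.mono (Finset.coe_subset.mpr hNW))]
        have hev : ∀ Hr, Hr ⊆ EWL W L' →
            (if (W ∩ reach (Hl ∪ Hr) (insert l L')).card < j then (1:ℝ) else 0)
            = (if N.card + ((W \ N) ∩ reach Hr (L' ∪ N)).card < j then (1:ℝ) else 0) := by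
          intro Hr hHr
          rw [reach_step hlW hlL' hHl hHr]
          rw [card_union_of_disjoint (Finset.sdiff_disjoint.symm.mono_right Finset.inter_subset_left)]
        rw [PW_congr hev]
        by_cases hjN : j ≤ N.card
        · have hzero : ∀ Hr, Hr ⊆ EWL W L' →
              (if N.card + ((W \ N) ∩ reach Hr (L' ∪ N)).card < j then (1:ℝ) else 0) = 0 := by
            intro Hr _
            rw [if_neg]
            omega
          rw [PW_congr hzero, PW_const]
          positivity
        · push_neg at hjN
          have hdNL' : Disjoint (W \ N) (L' ∪ N) := by
            rw [Finset.disjoint_union_right]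
            exact ⟨hdWL'.mono_left Finset.sdiff_subset, Finset.sdiff_disjoint⟩
          have hdL'N : Disjoint L' N := (hdWL'.symm.mono_right hNW)
          have hrestrict : PW β (EWL W L')
              (fun Hr => if N.card + ((W \ N) ∩ reach Hr (L' ∪ N)).card < j then (1:ℝ) else 0)
              = PW β (EWL (W \ N) (L' ∪ N))
                  (fun H₀ => if ((W \ N) ∩ reach H₀ (L' ∪ N)).card < j - N.card then (1:ℝ) else 0) := by
            apply PW_restrict (EWL_sub hNW)
            intro Hr hHr
            have hdrop : (W \ N) ∩ reach Hr (L' ∪ N)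
                = (W \ N) ∩ reach (Hr ∩ EWL (W \ N) (L' ∪ N)) (L' ∪ N) := by
              have hun : (Hr ∩ EWL (W \ N) (L' ∪ N)) ∪ (Hr \ EWL (W \ N) (L' ∪ N)) = Hr := by
                ext x
                simp only [Finset.mem_union, Finset.mem_inter, Finset.mem_sdiff]
                tauto
              conv_lhs => rw [← hun]
              apply reach_drop_source _ hdNL'
              intro e he'
              induction e using Sym2.ind with
              | _ a b =>
                intro x hx
                obtain ⟨heHr, heE⟩ := mem_sdiff.mp he'
                have hm := mem_EWL.mp (hHr heHr)
                obtain ⟨hab, ⟨ha, hb⟩, hW⟩ := hm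
                have hnot : a ∉ W \ N ∧ b ∉ W \ N := by
                  by_contra hcon
                  apply heE
                  rw [mem_EWL]
                  refine ⟨hab, ⟨?_, ?_⟩, by tauto⟩
                  · rcases mem_union.mp ha with h | h
                    · by_cases haN : a ∈ N
                      · exact mem_union_right _ (mem_union_right _ haN)
                      · exact mem_union_left _ (mem_sdiff.mpr ⟨h, haN⟩)
                    · exact mem_union_right _ (mem_union_left _ h)
                  · rcases mem_union.mp hb with h | h
                    · by_cases hbN : b ∈ N
                      · exact mem_union_right _ (mem_union_right _ hbN)
                      · exact mem_union_left _ (mem_sdiff.mpr ⟨h, hbN⟩)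
                    · exact mem_union_right _ (mem_union_left _ h)
                have hkey : ∀ y : V, y ∈ W ∪ L' → y ∉ W \ N → y ∈ L' ∪ N := by
                  intro y hy hyn
                  rcases mem_union.mp hy with h | h
                  · by_cases hyN : y ∈ N
                    · exact mem_union_right _ hyN
                    · exact absurd (mem_sdiff.mpr ⟨h, hyN⟩) hyn
                  · exact mem_union_left _ h
                rcases Sym2.mem_iff.mp hx with rfl | rfl
                · exact hkey x ha hnot.1
                · exact hkey x hb hnot.2
            rw [hdrop]
            exact if_congr (by omega) rfl rfl
          rw [hrestrict]
          have hmeas : (j - N.card) + (L' ∪ N).card < n := by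
            rw [card_union_of_disjoint hdL'N]
            have : L.card = L'.card + 1 := by rw [hLins, card_insert_of_notMem hlL']
            omega
          have hWc' : m + (j - N.card) ≤ (W \ N).card := by
            rw [card_sdiff_of_subset hNW]
            have := card_le_card hNW
            omega
          calc _ ≤ ρ ^ (L' ∪ N).card := ih _ hmeas (j - N.card) (W \ N) (L' ∪ N) rfl hdNL' hWc'
            _ = ρ ^ (L'.card + Hl.card) := by rw [card_union_of_disjoint hdL'N, hNcard]
      calc _ ≤ PW β (W.image fun w => s(l, w)) (fun Hl => ρ ^ (L'.card + Hl.card)) :=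
            PW_mono hβ0 hβ1 hbound
        _ = ρ ^ L'.card * PW β (W.image fun w => s(l, w)) (fun Hl => ρ ^ Hl.card) := by
            rw [← PW_mul_const]
            exact PW_congr fun H _ => by rw [pow_add]
        _ = ρ ^ L'.card * (1 - β * (1 - ρ)) ^ W.card := by rw [PW_pow_card, hElcard]
        _ ≤ ρ ^ L'.card * ρ := by
            have h0 : (0:ℝ) ≤ 1 - β * (1 - ρ) := by nlinarith
            have h1 : 1 - β * (1 - ρ) ≤ 1 := by nlinarith
            have hmW : m ≤ W.card := by omega
            have := pow_le_pow_of_le_one h0 h1 hmW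
            have : (1 - β * (1 - ρ)) ^ W.card ≤ ρ := le_trans this hfix
            exact mul_le_mul_of_nonneg_left this (by positivity)
        _ = ρ ^ (insert l L').card := by
            rw [card_insert_of_notMem hlL', pow_succ]

/-! ### Symmetry under vertex relabelling -/

noncomputable def mapH (σ : V ≃ V) (H : Finset (Sym2 V)) : Finset (Sym2 V) :=
  H.image (Sym2.map σ)

lemma mapH_mapH (σ : V ≃ V) (H : Finset (Sym2 V)) : mapH σ.symm (mapH σ H) = H := by
  unfold mapH
  rw [Finset.image_image]
  have : (Sym2.map σ.symm ∘ Sym2.map σ) = id := by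
    funext e
    induction e using Sym2.ind with
    | _ a b => simp [Sym2.map_pair_eq]
  rw [this, Finset.image_id]

lemma mapH_card (σ : V ≃ V) (H : Finset (Sym2 V)) : (mapH σ H).card = H.card :=
  Finset.card_image_of_injective _ (Sym2.map.injective σ.injective)

lemma mapH_top (σ : V ≃ V) :
    mapH σ (⊤ : SimpleGraph V).edgeFinset = (⊤ : SimpleGraph V).edgeFinset := by
  apply Finset.eq_of_subset_of_card_le
  · intro e he
    obtain ⟨e', he', rfl⟩ := mem_image.mp he
    induction e' using Sym2.ind with
    | _ a b =>
      rw [Sym2.map_pair_eq]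
      simp only [SimpleGraph.mem_edgeFinset, SimpleGraph.mem_edgeSet, SimpleGraph.top_adj] at he' ⊢
      exact fun h => he' (σ.injective h)
  · rw [mapH_card]

lemma mapH_subset {σ : V ≃ V} {H E : Finset (Sym2 V)} (h : H ⊆ E) : mapH σ H ⊆ mapH σ E :=
  Finset.image_subset_image h

lemma rtg_mapH (σ : V ≃ V) {H : Finset (Sym2 V)} {a b : V}
    (h : Relation.ReflTransGen (rel H) a b) :
    Relation.ReflTransGen (rel (mapH σ H)) (σ a) (σ b) := by
  induction h with
  | refl => exact Relation.ReflTransGen.refl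
  | @tail x y hax hstep ih =>
    refine ih.tail ⟨?_, fun h => hstep.2 (σ.injective h)⟩
    have : Sym2.map σ s(x, y) ∈ mapH σ H := mem_image_of_mem _ hstep.1
    rwa [Sym2.map_pair_eq] at this

lemma reach_mapH (σ : V ≃ V) (H : Finset (Sym2 V)) (u : V) :
    reach (mapH σ H) {σ u} = (reach H {u}).image σ := by
  ext v
  simp only [mem_reach, mem_singleton, Finset.mem_image, exists_eq_left]
  constructor
  · intro h
    refine ⟨σ.symm v, ?_, Equiv.apply_symm_apply _ _⟩
    have := rtg_mapH σ.symm h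
    rwa [Equiv.symm_apply_apply, mapH_mapH] at this
  · rintro ⟨w, hw, rfl⟩
    exact rtg_mapH σ hw

lemma reach_mapH_card (σ : V ≃ V) (H : Finset (Sym2 V)) (u : V) :
    (reach (mapH σ H) {σ u}).card = (reach H {u}).card := by
  rw [reach_mapH, Finset.card_image_of_injective _ σ.injective]

lemma PW_reindex (β : ℝ) (σ : V ≃ V) (f : Finset (Sym2 V) → ℝ) :
    PW β (⊤ : SimpleGraph V).edgeFinset f
      = PW β (⊤ : SimpleGraph V).edgeFinset (fun H => f (mapH σ H)) := by
  unfold PW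
  refine Finset.sum_nbij' (fun H => mapH σ.symm H) (fun H => mapH σ H) ?_ ?_ ?_ ?_ ?_
  · intro H hH
    rw [mem_powerset] at hH ⊢
    calc mapH σ.symm H ⊆ mapH σ.symm (⊤ : SimpleGraph V).edgeFinset := mapH_subset hH
      _ = _ := mapH_top σ.symm
  · intro H hH
    rw [mem_powerset] at hH ⊢
    calc mapH σ H ⊆ mapH σ (⊤ : SimpleGraph V).edgeFinset := mapH_subset hH
      _ = _ := mapH_top σ
  · intro H _
    have := mapH_mapH σ.symm H
    rwa [Equiv.symm_symm] at this
  · intro H _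
    exact mapH_mapH σ H
  · intro H _
    rw [mapH_card]
    congr 2
    have := mapH_mapH σ.symm H
    rw [Equiv.symm_symm] at this
    exact this.symm

/-! ### events, Cauchy–Schwarz, sprinkling -/

lemma PW_one_sub {β : ℝ} {E : Finset (Sym2 V)} (g : Finset (Sym2 V) → ℝ) :
    PW β E (fun H => 1 - g H) = 1 - PW β E g := by
  have h := PW_add (β := β) (E := E) (fun H => 1 - g H) g
  simp only [sub_add_cancel] at h
  rw [PW_const] at h
  linarith

lemma PW_sum_swap {β : ℝ} {E : Finset (Sym2 V)} {ι : Type*} (s : Finset ι)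
    (g : ι → Finset (Sym2 V) → ℝ) :
    PW β E (fun H => ∑ u ∈ s, g u H) = ∑ u ∈ s, PW β E (fun H => g u H) := by
  unfold PW
  rw [Finset.sum_comm]
  refine sum_congr rfl fun H _ => ?_
  rw [Finset.mul_sum]

lemma ind_mul_ind (P Q : Prop) [Decidable P] [Decidable Q] :
    (if P then (1:ℝ) else 0) * (if Q then (1:ℝ) else 0) = if P ∧ Q then (1:ℝ) else 0 := by
  split_ifs <;> simp_all

lemma PW_sq {β : ℝ} (hβ0 : 0 ≤ β) (hβ1 : β ≤ 1) {E : Finset (Sym2 V)}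
    (f : Finset (Sym2 V) → ℝ) :
    (PW β E f) ^ 2 ≤ PW β E (fun H => f H ^ 2) := by
  have hw : ∀ H ∈ E.powerset, (0:ℝ) ≤ β ^ H.card * (1 - β) ^ (E.card - H.card) := by
    intro H _
    exact mul_nonneg (pow_nonneg hβ0 _) (pow_nonneg (by linarith) _)
  have key := Finset.sum_mul_sq_le_sq_mul_sq E.powerset
    (fun H => Real.sqrt (β ^ H.card * (1 - β) ^ (E.card - H.card)))
    (fun H => Real.sqrt (β ^ H.card * (1 - β) ^ (E.card - H.card)) * f H)
  have h1 : ∀ H ∈ E.powerset,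
      Real.sqrt (β ^ H.card * (1 - β) ^ (E.card - H.card))
        * (Real.sqrt (β ^ H.card * (1 - β) ^ (E.card - H.card)) * f H)
      = β ^ H.card * (1 - β) ^ (E.card - H.card) * f H := by
    intro H hH
    rw [← mul_assoc, Real.mul_self_sqrt (hw H hH)]
  have h2 : ∀ H ∈ E.powerset,
      Real.sqrt (β ^ H.card * (1 - β) ^ (E.card - H.card)) ^ 2
      = β ^ H.card * (1 - β) ^ (E.card - H.card) := by
    intro H hH
    exact Real.sq_sqrt (hw H hH)
  have h3 : ∀ H ∈ E.powerset,
      (Real.sqrt (β ^ H.card * (1 - β) ^ (E.card - H.card)) * f H) ^ 2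
      = β ^ H.card * (1 - β) ^ (E.card - H.card) * f H ^ 2 := by
    intro H hH
    rw [mul_pow, h2 H hH]
  rw [Finset.sum_congr rfl h1, Finset.sum_congr rfl h2, Finset.sum_congr rfl h3] at key
  have hsum1 : ∑ H ∈ E.powerset, β ^ H.card * (1 - β) ^ (E.card - H.card) = 1 := by
    have := PW_const (V := V) β E 1
    unfold PW at this
    simpa using this
  rw [hsum1, one_mul] at key
  exact key

noncomputable def pA (β : ℝ) (k : ℕ) (u : V) : ℝ :=
  PW β (⊤ : SimpleGraph V).edgeFinset (fun H => if k ≤ (reach H {u}).card then 1 else 0)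

noncomputable def pAA (β : ℝ) (k : ℕ) (u v : V) : ℝ :=
  PW β (⊤ : SimpleGraph V).edgeFinset
    (fun H => if k ≤ (reach H {u}).card ∧ k ≤ (reach H {v}).card then 1 else 0)

lemma pAA_nonneg {β : ℝ} (hβ0 : 0 ≤ β) (hβ1 : β ≤ 1) (k : ℕ) (u v : V) :
    0 ≤ pAA β k u v :=
  PW_nonneg hβ0 hβ1 fun H _ => by positivity

lemma pAA_le_one {β : ℝ} (hβ0 : 0 ≤ β) (hβ1 : β ≤ 1) (k : ℕ) (u v : V) :
    pAA β k u v ≤ 1 := by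
  have := PW_mono (E := (⊤ : SimpleGraph V).edgeFinset) hβ0 hβ1
    (f := fun H => if k ≤ (reach H {u}).card ∧ k ≤ (reach H {v}).card then (1:ℝ) else 0)
    (g := fun _ => 1) (fun H _ => by split <;> norm_num)
  rwa [PW_const] at this

lemma pAA_self (β : ℝ) (k : ℕ) (u : V) : pAA β k u u = pA β k u := by
  unfold pAA pA
  exact PW_congr fun H _ => if_congr and_self_iff rfl rfl

lemma pAA_map (β : ℝ) (k : ℕ) (σ : V ≃ V) (u v : V) :
    pAA β k (σ u) (σ v) = pAA β k u v := by
  unfold pAA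
  rw [PW_reindex β σ]
  refine PW_congr fun H _ => ?_
  rw [reach_mapH_card, reach_mapH_card]

noncomputable def rowSum (β : ℝ) (k : ℕ) (u : V) : ℝ :=
  ∑ v ∈ Finset.univ.erase u, pAA β k u v

lemma rowSum_eq (β : ℝ) (k : ℕ) (u u' : V) : rowSum β k u = rowSum β k u' := by
  classical
  unfold rowSum
  set σ := Equiv.swap u u' with hσ
  have h1 : ∀ v ∈ Finset.univ.erase u, pAA β k u v = pAA β k u' (σ v) := by
    intro v _
    rw [← pAA_map β k σ u v, Equiv.swap_apply_left]
  rw [Finset.sum_congr rfl h1]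
  have h2 : ∑ x ∈ (Finset.univ.erase u).image σ, pAA β k u' x
      = ∑ v ∈ Finset.univ.erase u, pAA β k u' (σ v) :=
    Finset.sum_image (fun x _ y _ h => σ.injective h)
  rw [← h2, Finset.image_erase σ.injective, Finset.image_univ_equiv, Equiv.swap_apply_left]

lemma rowSum_le (β : ℝ) (hβ0 : 0 ≤ β) (hβ1 : β ≤ 1) (k : ℕ) (u : V) :
    rowSum β k u ≤ (Fintype.card V : ℝ) - 1 := by
  unfold rowSum
  calc ∑ v ∈ Finset.univ.erase u, pAA β k u v ≤ ∑ v ∈ Finset.univ.erase u, 1 :=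
        Finset.sum_le_sum fun v _ => pAA_le_one hβ0 hβ1 k u v
    _ = (Fintype.card V : ℝ) - 1 := by
        rw [Finset.sum_const, Finset.card_erase_of_mem (Finset.mem_univ u), Finset.card_univ]
        have : 1 ≤ Fintype.card V := Fintype.card_pos_iff.mpr ⟨u⟩
        rw [nsmul_eq_mul, mul_one, Nat.cast_sub this]
        push_cast
        ring

/-- Cauchy–Schwarz + symmetry: each row sum is at least `n q² - 1` where `q` lower
bounds each `pA`. -/
lemma rowSum_lower {β q : ℝ} (hβ0 : 0 ≤ β) (hβ1 : β ≤ 1) (hq0 : 0 ≤ q) {k : ℕ}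
    (hq : ∀ u : V, q ≤ pA β k u) (u : V) :
    (Fintype.card V : ℝ) * q ^ 2 - 1 ≤ rowSum β k u := by
  classical
  set n := Fintype.card V with hn
  have hn1 : 1 ≤ n := Fintype.card_pos_iff.mpr ⟨u⟩
  -- E[M] = ∑ pA, E[M²] = ∑∑ pAA
  have hM : PW β (⊤ : SimpleGraph V).edgeFinset
      (fun H => ∑ w : V, (if k ≤ (reach H {w}).card then (1:ℝ) else 0)) = ∑ w : V, pA β k w :=
    PW_sum_swap _ _
  have hM2 : PW β (⊤ : SimpleGraph V).edgeFinset
      (fun H => (∑ w : V, (if k ≤ (reach H {w}).card then (1:ℝ) else 0)) ^ 2)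
      = ∑ w : V, ∑ w' : V, pAA β k w w' := by
    have hexp : ∀ H : Finset (Sym2 V),
        (∑ w : V, (if k ≤ (reach H {w}).card then (1:ℝ) else 0)) ^ 2
        = ∑ w : V, ∑ w' : V,
            (if k ≤ (reach H {w}).card ∧ k ≤ (reach H {w'}).card then (1:ℝ) else 0) := by
      intro H
      rw [sq, Finset.sum_mul_sum]
      refine Finset.sum_congr rfl fun w _ => Finset.sum_congr rfl fun w' _ => ?_
      exact ind_mul_ind _ _
    have e1 : PW β (⊤ : SimpleGraph V).edgeFinset
        (fun H => (∑ w : V, (if k ≤ (reach H {w}).card then (1:ℝ) else 0)) ^ 2)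
        = PW β (⊤ : SimpleGraph V).edgeFinset
          (fun H => ∑ w : V, ∑ w' : V,
            (if k ≤ (reach H {w}).card ∧ k ≤ (reach H {w'}).card then (1:ℝ) else 0)) :=
      PW_congr fun H _ => hexp H
    rw [e1, PW_sum_swap]
    exact Finset.sum_congr rfl fun w _ => PW_sum_swap _ _
  have hCS := PW_sq hβ0 hβ1 (E := (⊤ : SimpleGraph V).edgeFinset)
    (fun H => ∑ w : V, (if k ≤ (reach H {w}).card then (1:ℝ) else 0))
  rw [hM, hM2] at hCS
  -- split diagonal
  have hsplit : ∀ w : V, ∑ w' : V, pAA β k w w' = pA β k w + rowSum β k w := by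
    intro w
    rw [← Finset.add_sum_erase _ _ (Finset.mem_univ w), pAA_self]
    rfl
  rw [Finset.sum_congr rfl fun w _ => hsplit w, Finset.sum_add_distrib] at hCS
  have hrows : ∑ w : V, rowSum β k w = (n : ℝ) * rowSum β k u := by
    rw [Finset.sum_congr rfl fun w _ => rowSum_eq β k w u]
    rw [Finset.sum_const, Finset.card_univ, nsmul_eq_mul, hn]
  rw [hrows] at hCS
  have hlow : (n : ℝ) * q ≤ ∑ w : V, pA β k w := by
    calc (n:ℝ) * q = ∑ _w : V, q := by rw [Finset.sum_const, Finset.card_univ, nsmul_eq_mul, hn]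
      _ ≤ ∑ w : V, pA β k w := Finset.sum_le_sum fun w _ => hq w
  have hup : ∑ w : V, pA β k w ≤ (n : ℝ) := by
    calc ∑ w : V, pA β k w ≤ ∑ _w : V, (1:ℝ) := by
          refine Finset.sum_le_sum fun w _ => ?_
          rw [← pAA_self]
          exact pAA_le_one hβ0 hβ1 k w w
      _ = (n : ℝ) := by rw [Finset.sum_const, Finset.card_univ, nsmul_eq_mul, hn]; ring
  have hnpos : (0:ℝ) < n := by exact_mod_cast hn1
  have hsq : ((n:ℝ) * q) ^ 2 ≤ (∑ w : V, pA β k w) ^ 2 := by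
    have h0 : (0:ℝ) ≤ (n:ℝ) * q := by positivity
    exact pow_le_pow_left₀ h0 hlow 2
  have hkey : (n:ℝ) * ((n:ℝ) * q ^ 2 - 1) ≤ (n:ℝ) * rowSum β k u := by nlinarith [hsq, hCS, hup]
  exact le_of_mul_le_mul_left hkey hnpos

/-! ### lower bound on cluster-size probability -/

lemma EWL_full (u : V) : EWL (Finset.univ.erase u) {u} = (⊤ : SimpleGraph V).edgeFinset := by
  ext e
  induction e using Sym2.ind with
  | _ a b =>
    rw [mem_EWL]
    simp only [SimpleGraph.mem_edgeFinset, SimpleGraph.mem_edgeSet, SimpleGraph.top_adj]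
    constructor
    · rintro ⟨hab, _, _⟩
      exact hab
    · intro hab
      have hmem : ∀ x : V, x ∈ Finset.univ.erase u ∪ {u} := by
        intro x
        by_cases hx : x = u
        · subst hx; exact mem_union_right _ (mem_singleton_self _)
        · exact mem_union_left _ (mem_erase.mpr ⟨hx, mem_univ _⟩)
      refine ⟨hab, ⟨hmem a, hmem b⟩, ?_⟩
      by_cases ha : a = u
      · subst ha
        exact Or.inr (mem_erase.mpr ⟨fun h => hab h.symm, mem_univ _⟩)
      · exact Or.inl (mem_erase.mpr ⟨ha, mem_univ _⟩)

lemma mem_reach_self (H : Finset (Sym2 V)) (u : V) : u ∈ reach H {u} :=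
  subset_reach H {u} (mem_singleton_self u)

lemma erase_inter_reach (H : Finset (Sym2 V)) (u : V) :
    Finset.univ.erase u ∩ reach H {u} = (reach H {u}).erase u := by
  ext v
  simp only [mem_inter, mem_erase, mem_univ, true_and, and_comm]

lemma cluster_lower {β ρ : ℝ} (hβ0 : 0 ≤ β) (hβ1 : β ≤ 1) (hρ0 : 0 ≤ ρ) (hρ1 : ρ ≤ 1)
    {k : ℕ} (hk1 : 1 ≤ k) (hkn : k ≤ Fintype.card V)
    (hfix : (1 - β * (1 - ρ)) ^ (Fintype.card V - k) ≤ ρ) (u : V) :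
    1 - ρ ≤ pA β k u := by
  classical
  have hcomp : pA β k u = 1 - PW β (⊤ : SimpleGraph V).edgeFinset
      (fun H => if (reach H {u}).card < k then (1:ℝ) else 0) := by
    unfold pA
    rw [← PW_one_sub]
    refine PW_congr fun H _ => ?_
    by_cases h : k ≤ (reach H {u}).card
    · rw [if_pos h, if_neg (by omega)]
      ring
    · rw [if_neg h, if_pos (by omega)]
      ring
  rw [hcomp]
  have hbnd : PW β (⊤ : SimpleGraph V).edgeFinset
      (fun H => if (reach H {u}).card < k then (1:ℝ) else 0) ≤ ρ := by
    have hW : Disjoint (Finset.univ.erase u) ({u} : Finset V) := by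
      simp [Finset.disjoint_singleton_right]
    have hcardW : (Finset.univ.erase u).card = Fintype.card V - 1 := by
      rw [Finset.card_erase_of_mem (mem_univ u), Finset.card_univ]
    have hWc : (Fintype.card V - k) + (k - 1) ≤ (Finset.univ.erase u).card := by
      rw [hcardW]; omega
    have hex := explore_main hβ0 hβ1 hρ0 hρ1 (Fintype.card V - k)
      hfix ((k-1) + ({u} : Finset V).card) (k - 1) (Finset.univ.erase u) {u} rfl hW hWc
    rw [EWL_full] at hex
    have hev : ∀ H, H ⊆ (⊤ : SimpleGraph V).edgeFinset →
        (if (reach H {u}).card < k then (1:ℝ) else 0)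
        = (if ((Finset.univ.erase u) ∩ reach H {u}).card < k - 1 then (1:ℝ) else 0) := by
      intro H _
      rw [erase_inter_reach]
      have hcard : (reach H {u}).card = ((reach H {u}).erase u).card + 1 := by
        rw [Finset.card_erase_add_one (mem_reach_self H u)]
      exact if_congr (by omega) rfl rfl
    rw [PW_congr hev]
    calc _ ≤ ρ ^ ({u} : Finset V).card := hex
      _ = ρ := by rw [Finset.card_singleton, pow_one]
  linarith

/-! ### sprinkling -/

lemma PW_ind_empty {β : ℝ} (F : Finset (Sym2 V)) :
    PW β F (fun H => if H = ∅ then (1:ℝ) else 0) = (1 - β) ^ F.card := by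
  unfold PW
  rw [Finset.sum_eq_single ∅]
  · simp
  · intro H _ hne
    dsimp only
    rw [if_neg hne]
    ring
  · intro h
    exact absurd (Finset.empty_mem_powerset F) h

lemma PW_empty_inter {β : ℝ} {F E : Finset (Sym2 V)} (hF : F ⊆ E) :
    PW β E (fun H => if H ∩ F = ∅ then (1:ℝ) else 0) = (1 - β) ^ F.card := by
  rw [PW_restrict hF _ (fun H₀ => if H₀ = ∅ then (1:ℝ) else 0) (fun H _ => rfl)]
  exact PW_ind_empty F

lemma conn_lower {β β₁ β₂ : ℝ} (hβ₁0 : 0 ≤ β₁) (hβ₁1 : β₁ ≤ 1) (hβ₂0 : 0 ≤ β₂)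
    (hβ₂1 : β₂ ≤ 1) (hβ : β = β₁ + β₂ - β₁ * β₂) (k : ℕ) (u v : V) :
    pAA β₁ k u v * (1 - (1 - β₂) ^ (k * k))
      ≤ PW β (⊤ : SimpleGraph V).edgeFinset
          (fun H => if Relation.ReflTransGen (rel H) u v then (1:ℝ) else 0) := by
  classical
  set E := (⊤ : SimpleGraph V).edgeFinset with hE
  have hq0 : (0:ℝ) ≤ (1 - β₂) ^ (k * k) := pow_nonneg (by linarith) _
  have hq1 : (1 - β₂) ^ (k * k) ≤ 1 := pow_le_one₀ (by linarith) (by linarith)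
  rw [PW_couple hβ E]
  have hpoint : ∀ H₁, H₁ ⊆ E →
      (if k ≤ (reach H₁ {u}).card ∧ k ≤ (reach H₁ {v}).card then (1:ℝ) else 0)
        * (1 - (1 - β₂) ^ (k * k))
      ≤ PW β₂ E (fun H₂ => if Relation.ReflTransGen (rel (H₁ ∪ H₂)) u v then (1:ℝ) else 0) := by
    intro H₁ hH₁
    by_cases hconn : Relation.ReflTransGen (rel H₁) u v
    · -- already connected: inner expectation is 1
      have h1 : PW β₂ E (fun H₂ => if Relation.ReflTransGen (rel (H₁ ∪ H₂)) u v
          then (1:ℝ) else 0) = 1 := by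
        have : ∀ H₂, H₂ ⊆ E → (if Relation.ReflTransGen (rel (H₁ ∪ H₂)) u v
            then (1:ℝ) else 0) = 1 := by
          intro H₂ _
          rw [if_pos (Relation.ReflTransGen.mono (fun a b => rel_mono Finset.subset_union_left) _ _ hconn)]
        rw [PW_congr this, PW_const]
      rw [h1]
      have hge0 : (0:ℝ) ≤ (if k ≤ (reach H₁ {u}).card ∧ k ≤ (reach H₁ {v}).card
          then (1:ℝ) else 0) := by split <;> norm_num
      have hle1 : (if k ≤ (reach H₁ {u}).card ∧ k ≤ (reach H₁ {v}).card
          then (1:ℝ) else 0) ≤ 1 := by split <;> norm_num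
      nlinarith
    · by_cases hAA : k ≤ (reach H₁ {u}).card ∧ k ≤ (reach H₁ {v}).card
      · -- both clusters big, not connected: sprinkle
        set S := reach H₁ {u} with hS
        set T := reach H₁ {v} with hT
        have hdST : Disjoint S T := by
          rw [Finset.disjoint_left]
          intro x hxS hxT
          apply hconn
          obtain ⟨l, hl, hrS⟩ := mem_reach.mp hxS
          rw [mem_singleton] at hl; rw [hl] at hrS
          obtain ⟨l', hl', hrT⟩ := mem_reach.mp hxT
          rw [mem_singleton] at hl'; rw [hl'] at hrT
          exact hrS.trans (by haveI : Std.Symm (rel H₁) := ⟨fun a b h => rel_symm h⟩; exact Relation.ReflTransGen.stdSymm.symm _ _ hrT)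
        set F := (S ×ˢ T).image (fun p => s(p.1, p.2)) with hF
        have hFcard : F.card = S.card * T.card := by
          rw [hF, Finset.card_image_of_injOn, Finset.card_product]
          rintro ⟨a, b⟩ hab ⟨a', b'⟩ hab' hs
          rw [Finset.mem_coe, Finset.mem_product] at hab hab'
          rw [Sym2.eq_iff] at hs
          rcases hs with ⟨rfl, rfl⟩ | ⟨rfl, rfl⟩
          · rfl
          · exact absurd hab'.1 (Finset.disjoint_right.mp hdST hab.2)
        have hFE : F ⊆ E := by
          intro e he
          obtain ⟨⟨a, b⟩, hab, rfl⟩ := mem_image.mp he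
          rw [Finset.mem_product] at hab
          rw [hE, SimpleGraph.mem_edgeFinset, SimpleGraph.mem_edgeSet, SimpleGraph.top_adj]
          intro h
          exact Finset.disjoint_left.mp hdST hab.1 (h ▸ hab.2)
        have hinner : ∀ H₂, H₂ ⊆ E →
            (1 : ℝ) - (if H₂ ∩ F = ∅ then (1:ℝ) else 0)
            ≤ (if Relation.ReflTransGen (rel (H₁ ∪ H₂)) u v then (1:ℝ) else 0) := by
          intro H₂ _
          by_cases hFe : H₂ ∩ F = ∅
          · rw [if_pos hFe]
            split <;> norm_num
          · obtain ⟨e, he⟩ := Finset.nonempty_iff_ne_empty.mpr hFe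
            obtain ⟨heH₂, heF⟩ := mem_inter.mp he
            obtain ⟨⟨a, b⟩, hab, rfl⟩ := mem_image.mp heF
            rw [Finset.mem_product] at hab
            have hne : a ≠ b := fun h => Finset.disjoint_left.mp hdST hab.1 (h ▸ hab.2)
            have hconn' : Relation.ReflTransGen (rel (H₁ ∪ H₂)) u v := by
              obtain ⟨l, hl, hrS⟩ := mem_reach.mp hab.1
              rw [mem_singleton] at hl; rw [hl] at hrS
              obtain ⟨l', hl', hrT⟩ := mem_reach.mp hab.2
              rw [mem_singleton] at hl'; rw [hl'] at hrT
              have h1 : Relation.ReflTransGen (rel (H₁ ∪ H₂)) u a :=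
                Relation.ReflTransGen.mono (fun x y => rel_mono Finset.subset_union_left) _ _ hrS
              have h2 : Relation.ReflTransGen (rel (H₁ ∪ H₂)) v b :=
                Relation.ReflTransGen.mono (fun x y => rel_mono Finset.subset_union_left) _ _ hrT
              exact (h1.tail ⟨mem_union_right _ heH₂, hne⟩).trans
                (by haveI : Std.Symm (rel (H₁ ∪ H₂)) := ⟨fun a b h => rel_symm h⟩; exact Relation.ReflTransGen.stdSymm.symm _ _ h2)
            rw [if_neg hFe, if_pos hconn']
            norm_num
        calc (if k ≤ (reach H₁ {u}).card ∧ k ≤ (reach H₁ {v}).card then (1:ℝ) else 0)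
              * (1 - (1 - β₂) ^ (k * k))
            = 1 - (1 - β₂) ^ (k * k) := by rw [if_pos hAA]; ring
          _ ≤ 1 - (1 - β₂) ^ F.card := by
              have : (1 - β₂) ^ F.card ≤ (1 - β₂) ^ (k * k) := by
                apply pow_le_pow_of_le_one (by linarith) (by linarith)
                rw [hFcard]
                exact Nat.mul_le_mul hAA.1 hAA.2
              linarith
          _ = PW β₂ E (fun H₂ => 1 - (if H₂ ∩ F = ∅ then (1:ℝ) else 0)) := by
              rw [PW_one_sub, PW_empty_inter hFE]
          _ ≤ _ := PW_mono hβ₂0 hβ₂1 hinner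
      · rw [if_neg hAA]
        have : (0:ℝ) * (1 - (1 - β₂) ^ (k * k)) = 0 := by ring
        rw [this]
        refine PW_nonneg hβ₂0 hβ₂1 fun H₂ _ => ?_
        split <;> norm_num
  calc pAA β₁ k u v * (1 - (1 - β₂) ^ (k * k))
      = PW β₁ E (fun H₁ => (if k ≤ (reach H₁ {u}).card ∧ k ≤ (reach H₁ {v}).card
          then (1:ℝ) else 0) * (1 - (1 - β₂) ^ (k * k))) := by
        unfold pAA
        rw [← hE]
        rw [show (fun H₁ => (if k ≤ (reach H₁ {u}).card ∧ k ≤ (reach H₁ {v}).card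
          then (1:ℝ) else 0) * (1 - (1 - β₂) ^ (k * k)))
          = (fun H₁ => (1 - (1 - β₂) ^ (k * k)) * (if k ≤ (reach H₁ {u}).card
              ∧ k ≤ (reach H₁ {v}).card then (1:ℝ) else 0)) from funext fun H => by ring]
        rw [PW_mul_const]
        ring
    _ ≤ _ := PW_mono hβ₁0 hβ₁1 hpoint

/-! ### lower bound for the expected final size -/

lemma rtg_reachable {H : Finset (Sym2 V)} {a b : V}
    (h : Relation.ReflTransGen (rel H) a b) :
    (percSubgraph (⊤ : SimpleGraph V) H).Reachable a b := by
  induction h with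
  | refl => exact SimpleGraph.Reachable.refl _
  | @tail x y hax hstep ih =>
    refine ih.trans (SimpleGraph.Adj.reachable ?_)
    exact And.intro hstep.2 hstep.1

lemma reach_subset_reachedSet {H : Finset (Sym2 V)} {I : Finset V} {u : V} (hu : u ∈ I) :
    reach H {u} ⊆ reachedSet (⊤ : SimpleGraph V) H I := by
  intro v hv
  obtain ⟨l, hl, hr⟩ := mem_reach.mp hv
  rw [mem_singleton] at hl
  rw [hl] at hr
  unfold reachedSet
  rw [Finset.mem_filter]
  exact ⟨mem_univ _, u, hu, rtg_reachable hr⟩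

lemma expectedFinalSize_eq_PW (β : ℝ) (I : Finset V) :
    expectedFinalSize (⊤ : SimpleGraph V) β I
      = PW β (⊤ : SimpleGraph V).edgeFinset
          (fun H => ((reachedSet (⊤ : SimpleGraph V) H I).card : ℝ)) := by
  unfold expectedFinalSize percWeight PW
  congr!

lemma expected_lower_aux {β β₁ β₂ ρ : ℝ} (hβ₁0 : 0 ≤ β₁) (hβ₁1 : β₁ ≤ 1)
    (hβ₂0 : 0 ≤ β₂) (hβ₂1 : β₂ ≤ 1) (hβc : β = β₁ + β₂ - β₁ * β₂)
    (hρ0 : 0 ≤ ρ) (hρ1 : ρ ≤ 1) {k : ℕ} (hk1 : 1 ≤ k) (hkn : k ≤ Fintype.card V)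
    (hfix : (1 - β₁ * (1 - ρ)) ^ (Fintype.card V - k) ≤ ρ)
    (I : Finset V) (hI : I.Nonempty) (hβ0 : 0 ≤ β) (hβle : β ≤ 1) :
    (Fintype.card V : ℝ) * (1 - ρ) ^ 2 - 1 - (Fintype.card V : ℝ) * (1 - β₂) ^ (k * k)
      ≤ expectedFinalSize (⊤ : SimpleGraph V) β I := by
  classical
  obtain ⟨u, hu⟩ := hI
  set n := Fintype.card V with hn
  set E := (⊤ : SimpleGraph V).edgeFinset with hE
  set e := (1 - β₂) ^ (k * k) with he
  have he0 : 0 ≤ e := pow_nonneg (by linarith) _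
  have he1 : e ≤ 1 := pow_le_one₀ (by linarith) (by linarith)
  -- step 1: reduce to the cluster of u
  have step1 : PW β E (fun H => ((reach H {u}).card : ℝ))
      ≤ expectedFinalSize (⊤ : SimpleGraph V) β I := by
    rw [expectedFinalSize_eq_PW]
    refine PW_mono hβ0 hβle fun H _ => ?_
    exact_mod_cast Finset.card_le_card (reach_subset_reachedSet hu)
  -- step 2: expectation of cluster size = sum of connection probabilities
  have hcard : ∀ H : Finset (Sym2 V), ((reach H {u}).card : ℝ)
      = ∑ v : V, (if Relation.ReflTransGen (rel H) u v then (1:ℝ) else 0) := by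
    intro H
    unfold reach
    rw [Finset.card_filter]
    push_cast
    refine Finset.sum_congr rfl fun v _ => ?_
    refine if_congr ?_ rfl rfl
    simp
  have step2 : PW β E (fun H => ((reach H {u}).card : ℝ))
      = ∑ v : V, PW β E (fun H => if Relation.ReflTransGen (rel H) u v then (1:ℝ) else 0) := by
    rw [PW_congr fun H _ => hcard H]
    exact PW_sum_swap _ _
  -- step 3: drop the diagonal term
  have step3 : ∑ v ∈ Finset.univ.erase u,
      PW β E (fun H => if Relation.ReflTransGen (rel H) u v then (1:ℝ) else 0)
      ≤ ∑ v : V, PW β E (fun H => if Relation.ReflTransGen (rel H) u v then (1:ℝ) else 0) := by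
    refine Finset.sum_le_sum_of_subset_of_nonneg (Finset.subset_univ _) fun v _ _ => ?_
    refine PW_nonneg hβ0 hβle fun H _ => ?_
    split <;> norm_num
  -- step 4: sprinkling bound for each pair
  have step4 : ∀ v ∈ Finset.univ.erase u,
      pAA β₁ k u v * (1 - e)
      ≤ PW β E (fun H => if Relation.ReflTransGen (rel H) u v then (1:ℝ) else 0) := by
    intro v _
    exact conn_lower hβ₁0 hβ₁1 hβ₂0 hβ₂1 hβc k u v
  -- step 5: row sum lower bound
  have hq : ∀ w : V, (1 - ρ) ≤ pA β₁ k w := fun w =>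
    cluster_lower hβ₁0 hβ₁1 hρ0 hρ1 hk1 hkn hfix w
  have step5 : (n : ℝ) * (1 - ρ) ^ 2 - 1 ≤ rowSum β₁ k u :=
    rowSum_lower hβ₁0 hβ₁1 (by linarith) hq u
  -- combine
  have hrow_le : rowSum β₁ k u ≤ (n : ℝ) := le_trans (rowSum_le β₁ hβ₁0 hβ₁1 k u) (by linarith)
  have hsum : rowSum β₁ k u * (1 - e) ≤ ∑ v ∈ Finset.univ.erase u,
      PW β E (fun H => if Relation.ReflTransGen (rel H) u v then (1:ℝ) else 0) := by
    rw [rowSum, Finset.sum_mul]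
    exact Finset.sum_le_sum step4
  have hrow_nonneg : 0 ≤ rowSum β₁ k u :=
    Finset.sum_nonneg fun v _ => pAA_nonneg hβ₁0 hβ₁1 k u v
  calc (n : ℝ) * (1 - ρ) ^ 2 - 1 - (n : ℝ) * e
      ≤ rowSum β₁ k u - rowSum β₁ k u * e := by nlinarith
    _ = rowSum β₁ k u * (1 - e) := by ring
    _ ≤ ∑ v ∈ Finset.univ.erase u,
        PW β E (fun H => if Relation.ReflTransGen (rel H) u v then (1:ℝ) else 0) := hsum
    _ ≤ ∑ v : V, PW β E (fun H => if Relation.ReflTransGen (rel H) u v then (1:ℝ) else 0) := step3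
    _ = PW β E (fun H => ((reach H {u}).card : ℝ)) := step2.symm
    _ ≤ _ := step1

/-! ### the main theorem -/

set_option maxHeartbeats 1000000 in
/-- Reed–Frost epidemic on the complete graph `Kₙ` with `β = c/(n-1)`, `c > 1`: if
`γ ∈ (0,1)` solves `γ + e^{-γc} = 1`, then for every `ε > 0` and all large enough `n`,
the expected final size from any nonempty initial set is at least `(γ² - ε) n`. -/
theorem complete_graph_large_epidemic
    (c : ℝ) (hc : 1 < c) (γ : ℝ) (hγ0 : 0 < γ) (hγeq : γ + Real.exp (-γ * c) = 1)
    (ε : ℝ) (hε : 0 < ε) :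
    ∃ N : ℕ, ∀ n ≥ N, ∀ I : Finset (Fin n), I.Nonempty →
      (γ ^ 2 - ε) * (n : ℝ)
        ≤ expectedFinalSize (⊤ : SimpleGraph (Fin n)) (c / ((n : ℝ) - 1)) I := by
  classical
  -- basic facts about γ
  have hexpγ : Real.exp (-γ * c) = 1 - γ := by linarith only [hγeq]
  have hγ1 : γ < 1 := by
    have h := Real.exp_pos (-γ * c)
    linarith only [h, hexpγ]
  have ht0' : (0:ℝ) < 1 - γ := by linarith only [hγ1]
  -- dual subcriticality : c * (1 - γ) < 1
  have hlog : Real.log (1 - γ) = -γ * c := by rw [← hexpγ, Real.log_exp]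
  have hs : c * (1 - γ) < 1 := by
    have hinv : Real.log (1 - γ)⁻¹ < (1 - γ)⁻¹ - 1 := by
      apply Real.log_lt_sub_one_of_pos (by positivity)
      intro h
      rw [inv_eq_one] at h
      linarith only [h, hγ0]
    rw [Real.log_inv, hlog] at hinv
    have h2 : (1 - γ)⁻¹ - 1 = γ / (1 - γ) := by field_simp; ring
    rw [h2] at hinv
    have h4 := (mul_lt_mul_iff_of_pos_right ht0').mpr hinv
    rw [div_mul_cancel₀ _ (ne_of_gt ht0')] at h4
    have h5 : γ * (c * (1 - γ)) = -(-γ * c) * (1 - γ) := by ring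
    have h6 : γ * (c * (1 - γ)) < γ * 1 := by rw [h5]; linarith only [h4]
    exact lt_of_mul_lt_mul_left h6 (le_of_lt hγ0)
  set s := c * (1 - γ) with hsdef
  have hs0 : 0 < s := by rw [hsdef]; positivity
  -- the perturbation ε₁
  set ε₁ := min (ε/4) (min (γ/2) ((1 - s)/(2*c))) with hε₁def
  have hε₁0 : 0 < ε₁ := by
    apply lt_min (by positivity)
    apply lt_min (by positivity)
    have h : 0 < 1 - s := by linarith only [hs]
    positivity
  have hε₁ε : ε₁ ≤ ε/4 := min_le_left _ _
  have hε₁γ : ε₁ ≤ γ/2 := le_trans (min_le_right _ _) (min_le_left _ _)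
  have hε₁s : ε₁ ≤ (1 - s)/(2*c) := le_trans (min_le_right _ _) (min_le_right _ _)
  set q := γ - ε₁ with hqdef
  set ρ := 1 - q with hρdef
  have hq0 : 0 < q := by rw [hqdef]; linarith only [hε₁γ, hγ0]
  have hq1 : q < 1 := by rw [hqdef]; linarith only [hε₁0, hγ1]
  have hρ0 : 0 ≤ ρ := by rw [hρdef]; linarith only [hq1]
  have hρ1 : ρ ≤ 1 := by rw [hρdef]; linarith only [hq0]
  -- key strict inequality at the limit point
  have hL0 : Real.exp (-(c * q)) < ρ := by
    have hx : c * ε₁ ≤ (1 - s)/2 := by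
      have h2c : (0:ℝ) < 2*c := by linarith only [hc]
      have h := mul_le_mul_of_nonneg_left hε₁s (by linarith only [hc] : (0:ℝ) ≤ c)
      have he : c * ((1 - s)/(2*c)) = (1 - s)/2 := by
        field_simp
      linarith only [h, he]
    have hx0 : 0 < c * ε₁ := by positivity
    have hexp : Real.exp (-(c * ε₁)) > 1 - c * ε₁ := by
      have h := Real.add_one_lt_exp (x := -(c*ε₁)) (by linarith only [hx0])
      linarith only [h]
    have hXpos := Real.exp_pos (c * ε₁)
    have hcε : c * ε₁ < 1/2 := by linarith only [hx, hs0]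
    have hone : (1 - c*ε₁) * Real.exp (c*ε₁) < 1 := by
      calc (1-c*ε₁)*Real.exp (c*ε₁) < Real.exp (-(c*ε₁)) * Real.exp (c*ε₁) :=
            mul_lt_mul_of_pos_right hexp hXpos
        _ = 1 := by rw [← Real.exp_add]; norm_num
    have hnn : (0:ℝ) ≤ 1 - s - c*ε₁ := by linarith only [hx, hs]
    have h2 : 1 - γ ≤ (1 - γ + ε₁) * (1 - c * ε₁) := by
      have hexpand2 : (1 - γ + ε₁) * (1 - c * ε₁) - (1 - γ) = ε₁ * (1 - s - c*ε₁) := by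
        rw [hsdef]; ring
      have hp := mul_nonneg hε₁0.le hnn
      linarith only [hexpand2, hp]
    have hB : (0:ℝ) < 1 - γ + ε₁ := by linarith only [ht0', hε₁0]
    have hkey : (1 - γ) * Real.exp (c * ε₁) < 1 - γ + ε₁ := by
      have hstep1 : (1-γ)*Real.exp (c*ε₁) ≤ (1-γ+ε₁)*(1-c*ε₁)*Real.exp (c*ε₁) :=
        mul_le_mul_of_nonneg_right h2 (le_of_lt hXpos)
      have hstep2 : (1-γ+ε₁)*((1-c*ε₁)*Real.exp (c*ε₁)) < (1-γ+ε₁)*1 :=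
        mul_lt_mul_of_pos_left hone hB
      calc (1-γ)*Real.exp (c*ε₁) ≤ (1-γ+ε₁)*(1-c*ε₁)*Real.exp (c*ε₁) := hstep1
        _ = (1-γ+ε₁)*((1-c*ε₁)*Real.exp (c*ε₁)) := by ring
        _ < (1-γ+ε₁)*1 := hstep2
        _ = 1-γ+ε₁ := by ring
    calc Real.exp (-(c * q)) = Real.exp (-γ * c) * Real.exp (c * ε₁) := by
          rw [← Real.exp_add]
          congr 1
          rw [hqdef]
          ring
      _ = (1 - γ) * Real.exp (c * ε₁) := by rw [hexpγ]
      _ < 1 - γ + ε₁ := hkey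
      _ = ρ := by rw [hρdef, hqdef]; ring
  -- choose the sprinkling parameter t
  have hcont : Filter.Tendsto (fun t : ℝ => Real.exp (-((c - t) * q * (1 - 2*t))))
      (nhds 0) (nhds (Real.exp (-((c - 0) * q * (1 - 2*0))))) := by
    apply Filter.Tendsto.comp Real.continuous_exp.continuousAt
    apply Filter.Tendsto.neg
    exact (((continuous_const.sub continuous_id).mul continuous_const).mul
      (continuous_const.sub (continuous_const.mul continuous_id))).tendsto 0
  have hval : Real.exp (-((c - 0) * q * (1 - 2*0))) = Real.exp (-(c * q)) := by norm_num
  rw [hval] at hcont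
  have hev1 : ∀ᶠ t in nhds (0:ℝ), Real.exp (-((c - t) * q * (1 - 2*t))) < ρ :=
    hcont.eventually_lt_const hL0
  have hev2 : ∀ᶠ t in nhdsWithin (0:ℝ) (Set.Ioi 0),
      Real.exp (-((c - t) * q * (1 - 2*t))) < ρ :=
    hev1.filter_mono nhdsWithin_le_nhds
  have hev3 : ∀ᶠ t in nhdsWithin (0:ℝ) (Set.Ioi 0), t ∈ Set.Ioo (0:ℝ) (1/2) :=
    Filter.eventually_of_mem
      (Ioo_mem_nhdsGT_of_mem (by norm_num : (0:ℝ) ∈ Set.Ico 0 (1/2))) (fun t ht => ht)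
  obtain ⟨t, hgt, htIoo⟩ := (hev2.and hev3).exists
  obtain ⟨ht0, ht2⟩ := htIoo
  have htc : t < c := by linarith only [ht2, hc]
  -- eventually-n conditions
  have hcast : Filter.Tendsto (fun n : ℕ => (n:ℝ)) Filter.atTop Filter.atTop :=
    tendsto_natCast_atTop_atTop
  have e1 : ∀ᶠ n : ℕ in Filter.atTop, c + 1 < (n:ℝ) := hcast.eventually_gt_atTop _
  have e2 : ∀ᶠ n : ℕ in Filter.atTop, 2/ε * (1 + 1/t^3) + 1 < (n:ℝ) :=
    hcast.eventually_gt_atTop _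
  have e4 : ∀ᶠ n : ℕ in Filter.atTop, (4:ℝ) < (n:ℝ) := hcast.eventually_gt_atTop _
  obtain ⟨N, hN⟩ := Filter.eventually_atTop.mp ((e1.and e2).and e4)
  refine ⟨N, fun n hn I hI => ?_⟩
  obtain ⟨⟨hc1, he2⟩, he4⟩ := hN n hn
  -- per-n set-up
  set nR := (n:ℝ) with hnR
  have hnR1 : (1:ℝ) < nR - 1 := by linarith only [hc1, hc]
  have hnR0 : (0:ℝ) < nR - 1 := by linarith only [hnR1]
  have hnR4 : (4:ℝ) < nR := he4
  set β := c / (nR - 1) with hβdef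
  set β₂ := t / (nR - 1) with hβ₂def
  set β₁ := (β - β₂) / (1 - β₂) with hβ₁def
  have hβpos : 0 < β := by rw [hβdef]; positivity
  have hβlt1 : β < 1 := by
    rw [hβdef, div_lt_one hnR0]; linarith only [hc1]
  have hβ₂0 : 0 ≤ β₂ := by rw [hβ₂def]; positivity
  have hβ₂β : β₂ ≤ β := by
    rw [hβ₂def, hβdef]
    exact (div_le_div_iff_of_pos_right hnR0).mpr (le_of_lt htc)
  have hβ₂lt : β₂ < 1/2 := by
    have h1 : β₂ ≤ t := by
      rw [hβ₂def]
      exact div_le_self ht0.le (le_of_lt hnR1)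
    linarith only [h1, ht2]
  have h1β₂ : (0:ℝ) < 1 - β₂ := by linarith only [hβ₂lt]
  have hβ₁0 : 0 ≤ β₁ := by
    rw [hβ₁def]
    exact div_nonneg (by linarith only [hβ₂β]) (le_of_lt h1β₂)
  have hβ₁1 : β₁ ≤ 1 := by
    rw [hβ₁def, div_le_one h1β₂]
    linarith only [hβlt1]
  have hβc : β = β₁ + β₂ - β₁ * β₂ := by
    have h : β₁ * (1 - β₂) = β - β₂ := by
      rw [hβ₁def]
      exact div_mul_cancel₀ _ (ne_of_gt h1β₂)
    have h2 : β₁ * (1 - β₂) = β₁ - β₁ * β₂ := by ring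
    rw [h2] at h
    linarith only [h]
  have hβ₁low : (c - t)/(nR - 1) ≤ β₁ := by
    have hnum : β - β₂ = (c - t)/(nR - 1) := by
      rw [hβdef, hβ₂def, div_sub_div_same]
    rw [hβ₁def, ← hnum, le_div_iff₀ h1β₂]
    exact mul_le_of_le_one_right (by linarith only [hβ₂β]) (by linarith only [hβ₂0])
  -- the exploration scale k
  set k := Nat.ceil (t * nR) with hkdef
  have htn0 : 0 < t * nR := mul_pos ht0 (by linarith only [hnR4])
  have hk0 : 0 < k := Nat.ceil_pos.mpr htn0
  have hk1 : 1 ≤ k := hk0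
  have hkR : t * nR ≤ (k:ℝ) := Nat.le_ceil _
  have hkR2 : (k:ℝ) ≤ t * nR + 1 := le_of_lt (Nat.ceil_lt_add_one (le_of_lt htn0))
  have hkn : k ≤ n := by
    have hhalf : t * nR ≤ (1/2) * nR :=
      mul_le_mul_of_nonneg_right (le_of_lt ht2) (by linarith only [hnR4])
    have h : (k:ℝ) ≤ (n:ℝ) := by
      rw [← hnR]
      linarith only [hkR2, hhalf, hnR4]
    exact_mod_cast h
  have hnk : (1 - 2*t) * (nR - 1) ≤ ((n - k : ℕ) : ℝ) := by
    rw [Nat.cast_sub hkn, ← hnR]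
    have h1 : 0 ≤ t*(nR - 2) := mul_nonneg ht0.le (by linarith only [hnR4])
    have h2 : t*(nR-2) = t*nR - 2*t := by ring
    have h3 : (1 - 2*t) * (nR - 1) = nR - 1 - 2*(t*nR) + 2*t := by ring
    linarith only [hkR2, h1, h2, h3]
  -- the fixed point condition
  have hq1' : q ≤ 1 := le_of_lt hq1
  have h1ρ : 1 - ρ = q := by rw [hρdef]; ring
  have hfix : (1 - β₁ * (1 - ρ)) ^ (n - k) ≤ ρ := by
    rw [h1ρ]
    have hb0 : 0 ≤ 1 - β₁ * q := by
      have h := calc β₁ * q ≤ 1 * q := mul_le_mul_of_nonneg_right hβ₁1 hq0.le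
        _ = q := by ring
      linarith only [h, hq1']
    have hb : 1 - β₁ * q ≤ Real.exp (-(β₁ * q)) := by
      have h := Real.add_one_le_exp (-(β₁ * q))
      linarith only [h]
    have h1 : (c - t) * (1 - 2*t) ≤ β₁ * ((n - k:ℕ):ℝ) := by
      have heq : ((c-t)/(nR-1)) * ((1-2*t)*(nR-1)) = (c-t)*(1-2*t) := by
        field_simp
      rw [← heq]
      exact mul_le_mul hβ₁low hnk
        (mul_nonneg (by linarith only [ht2]) (by linarith only [hnR1])) hβ₁0
    have hexpon : (c - t) * q * (1 - 2*t) ≤ ((n - k : ℕ):ℝ) * (β₁ * q) := by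
      have h2 := mul_le_mul_of_nonneg_right h1 hq0.le
      have h3 : (c-t)*(1-2*t)*q = (c - t) * q * (1 - 2*t) := by ring
      have h4 : β₁ * ((n - k:ℕ):ℝ) * q = ((n - k : ℕ):ℝ) * (β₁ * q) := by ring
      linarith only [h2, h3, h4]
    calc (1 - β₁ * q) ^ (n - k) ≤ Real.exp (-(β₁ * q)) ^ (n - k) :=
          pow_le_pow_left₀ hb0 hb _
      _ = Real.exp (((n - k : ℕ):ℝ) * (-(β₁ * q))) := by rw [Real.exp_nat_mul]
      _ ≤ Real.exp (-((c - t) * q * (1 - 2*t))) := by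
          apply Real.exp_le_exp.mpr
          linarith only [hexpon]
      _ ≤ ρ := le_of_lt hgt
  -- apply the finite-n lower bound
  have hcard : Fintype.card (Fin n) = n := Fintype.card_fin n
  have haux := expected_lower_aux (V := Fin n) hβ₁0 hβ₁1 hβ₂0 (by linarith only [hβ₂lt] : β₂ ≤ 1)
      hβc hρ0 hρ1 hk1 (by rw [hcard]; exact hkn)
      (by rw [hcard]; exact hfix) I hI (le_of_lt hβpos) (le_of_lt hβlt1)
  rw [hcard, h1ρ] at haux
  -- final arithmetic
  have hnpos : (0:ℝ) < nR := by linarith only [hnR4]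
  set Er := (1 - β₂) ^ (k * k) with hErdef
  have hE0 : 0 ≤ Er := pow_nonneg (by linarith only [hβ₂lt]) _
  have hEbound : Er ≤ 1 / (t^3 * nR) := by
    have hy : t^3 * nR ≤ β₂ * ((k:ℝ) * (k:ℝ)) := by
      have hk2 : (t * nR)*(t * nR) ≤ (k:ℝ)*(k:ℝ) :=
        mul_le_mul hkR hkR (le_of_lt htn0) (Nat.cast_nonneg k)
      have h3 : (t/(nR-1)) * ((t*nR)*(t*nR)) ≤ β₂ * ((k:ℝ)*(k:ℝ)) := by
        rw [hβ₂def]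
        exact mul_le_mul_of_nonneg_left hk2 (by positivity)
      have h2 : t^3 * nR ≤ (t/(nR-1)) * ((t*nR)*(t*nR)) := by
        rw [div_mul_eq_mul_div, le_div_iff₀ hnR0]
        have e : t*((t*nR)*(t*nR)) = t^3*nR*nR := by ring
        have e2 : t^3*nR*nR - t^3*nR*(nR-1) = t^3*nR := by ring
        have hp : (0:ℝ) ≤ t^3*nR := by positivity
        rw [e]
        linarith only [e2, hp]
      linarith only [h2, h3]
    have hy0 : 0 < t^3 * nR := by positivity
    calc Er ≤ Real.exp (-β₂) ^ (k*k) := by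
          apply pow_le_pow_left₀ (by linarith only [hβ₂lt])
          have h := Real.add_one_le_exp (-β₂)
          linarith only [h]
      _ = Real.exp (((k*k : ℕ):ℝ) * (-β₂)) := by rw [Real.exp_nat_mul]
      _ ≤ Real.exp (-(t^3 * nR)) := by
          apply Real.exp_le_exp.mpr
          push_cast
          linarith only [hy]
      _ ≤ 1/(t^3 * nR) := by
          rw [Real.exp_neg, one_div]
          apply inv_anti₀ hy0
          have h := Real.add_one_le_exp (t^3*nR)
          linarith only [h]
  have hnE : nR * Er ≤ 1/t^3 := by
    have h1 : nR * Er ≤ nR * (1/(t^3*nR)) := mul_le_mul_of_nonneg_left hEbound (le_of_lt hnpos)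
    have h2 : nR * (1/(t^3*nR)) = 1/t^3 := by
      rw [one_div, mul_inv, ← mul_assoc, mul_comm nR, mul_assoc, mul_inv_cancel₀ (ne_of_gt hnpos),
        mul_one, one_div]
    linarith only [h1, h2]
  have hq2 : γ^2 - ε/2 ≤ q^2 := by
    have e : q^2 = γ^2 - 2*(γ*ε₁) + ε₁^2 := by rw [hqdef]; ring
    have h7 : γ*ε₁ ≤ ε₁ := mul_le_of_le_one_left hε₁0.le (le_of_lt hγ1)
    have h8 := sq_nonneg ε₁
    linarith only [e, h7, h8, hε₁ε]
  have hstep : 1 + 1/t^3 ≤ nR * (ε/2) := by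
    have hmul := mul_lt_mul_of_pos_right he2 (half_pos hε)
    have hLHS : (2/ε * (1 + 1/t^3) + 1)*(ε/2) = (1 + 1/t^3) + ε/2 := by
      field_simp
    rw [hLHS] at hmul
    linarith only [hmul, hε]
  have hq2n : nR*(γ^2 - ε/2) ≤ nR*q^2 := mul_le_mul_of_nonneg_left hq2 (le_of_lt hnpos)
  have hexpand : (γ^2 - ε)*nR = nR*(γ^2 - ε/2) - nR*(ε/2) := by ring
  have hfinal : (γ^2 - ε) * nR ≤ nR * q^2 - 1 - nR * Er := by
    rw [hexpand]
    linarith only [hstep, hnE, hq2n]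
  calc (γ^2 - ε) * nR ≤ nR * q^2 - 1 - nR * Er := hfinal
    _ ≤ expectedFinalSize (⊤ : SimpleGraph (Fin n)) β I := by
        have he5 : nR * q^2 - 1 - nR * Er = (n:ℝ) * q^2 - 1 - (n:ℝ)*((1-β₂)^(k*k)) := by
          rw [hErdef, hnR]
        rw [he5]
        exact haux


end VirusSpread
end
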